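/- arXiv:1510.00282 — 8 statements merged into one kernel-verified Lean document; each statement's English description precedes it below -/
import Mathlib

section
/- For an infinite word x over a finite alphabet that is not ultimately periodic, the subword complexity function satisfies p(n+1, x) ≥ p(n, x) + 1 for all n ≥ 1, where p(n, x) is the number of distinct factors of length n occurring in x. -/
/-- Number of distinct factors of length `n` of the infinite word `x`. -/
noncomputable def complexity {A : Type*} (x : ℕ → A) (n : ℕ) : ℕ :=
  Set.ncard {w : Fin n → A | ∃ j : ℕ, ∀ k : Fin n, w k = x (j + k)}

/-- `x` is ultimately periodic. -/
def UltimatelyPeriodic {A : Type*} (x : ℕ → A) : Prop :=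
  ∃ N T : ℕ, 0 < T ∧ ∀ k ≥ N, x (k + T) = x k

theorem stmt0 {A : Type*} [Fintype A] (x : ℕ → A)
    (hx : ¬ UltimatelyPeriodic x) :
    ∀ n : ℕ, 1 ≤ n → complexity x n + 1 ≤ complexity x (n + 1) := by
  intro n hn
  by_contra hlt
  push_neg at hlt
  have hle : complexity x (n + 1) ≤ complexity x n := Nat.lt_succ_iff.mp hlt
  classical
  set S : Set (Fin (n+1) → A) := {w | ∃ j : ℕ, ∀ k : Fin (n+1), w k = x (j + k)} with hS
  set T : Set (Fin n → A) := {w | ∃ j : ℕ, ∀ k : Fin n, w k = x (j + k)} with hT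
  set r : (Fin (n+1) → A) → (Fin n → A) := fun w k => w k.castSucc with hr
  -- factor function
  set f : ℕ → (Fin (n+1) → A) := fun j k => x (j + k) with hf
  have hfS : ∀ j, f j ∈ S := fun j => ⟨j, fun k => rfl⟩
  have himg : r '' S = T := by
    apply Set.Subset.antisymm
    · rintro v ⟨w, ⟨j, hj⟩, rfl⟩
      exact ⟨j, fun k => by simpa using hj k.castSucc⟩
    · rintro v ⟨j, hj⟩
      refine ⟨f j, hfS j, funext fun k => ?_⟩
      simp [hr, hf, hj k]
  have hSfin : S.Finite := Set.toFinite S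
  have hcard : (r '' S).ncard = S.ncard := by
    have h1 : (r '' S).ncard ≤ S.ncard := Set.ncard_image_le hSfin
    have h2 : S.ncard ≤ (r '' S).ncard := by
      rw [himg]; exact hle
    omega
  have hinj : Set.InjOn r S := Set.injOn_of_ncard_image_eq hcard hSfin
  -- determinism: equal length-n factors force equal next letters
  have hdet : ∀ i j : ℕ, (∀ k : Fin n, x (i + k) = x (j + k)) → x (i + n) = x (j + n) := by
    intro i j hij
    have heq : f i = f j := by
      apply hinj (hfS i) (hfS j)
      funext k
      simpa [hr, hf] using hij k
    have := congrFun heq (Fin.last n)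
    simpa [hf, Fin.last] using this
  -- pigeonhole: f not injective
  obtain ⟨a, b, hab, hfab⟩ := Finite.exists_ne_map_eq_of_infinite f
  wlog h : a < b generalizing a b
  · exact this b a hab.symm hfab.symm (by omega)
  -- propagate equality forward
  have hstep : ∀ m : ℕ, f (a + m) = f (b + m) := by
    intro m
    induction m with
    | zero => simpa using hfab
    | succ m ih =>
      funext k
      rcases lt_or_ge (k : ℕ) n with hk | hk
      · have := congrFun ih ⟨k + 1, by omega⟩
        simpa [hf, Nat.add_assoc, Nat.add_comm, Nat.add_left_comm] using this
      · have hkn : (k : ℕ) = n := by omega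
        have hx' : x (a + m + 1 + n) = x (b + m + 1 + n) := by
          apply hdet
          intro k'
          have := congrFun ih ⟨(k' : ℕ) + 1, by omega⟩
          have e1 : a + m + 1 + (k' : ℕ) = a + m + ((k' : ℕ) + 1) := by omega
          have e2 : b + m + 1 + (k' : ℕ) = b + m + ((k' : ℕ) + 1) := by omega
          rw [e1, e2]
          simpa [hf] using this
        simp only [hf]
        have e1 : a + (m + 1) + (k : ℕ) = a + m + 1 + n := by omega
        have e2 : b + (m + 1) + (k : ℕ) = b + m + 1 + n := by omega
        rw [e1, e2]; exact hx'
  -- ultimately periodic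
  apply hx
  refine ⟨a, b - a, by omega, fun k hk => ?_⟩
  have hm : k = a + (k - a) := by omega
  have h1 := congrFun (hstep (k - a)) ⟨0, by omega⟩
  have : x (a + (k - a) + 0) = x (b + (k - a) + 0) := by simpa [hf] using h1
  have hb : b + (k - a) = k + (b - a) := by omega
  rw [hm]
  simpa [hb, ← hm] using this.symm
end

section
/- If x is an infinite word over a finite alphabet that is not ultimately periodic, then p(n, x) ≥ n + 1 for all n ≥ 1. -/
set_option linter.unusedSectionVars false

section Aux

variable {A : Type*} [Fintype A] (x : ℕ → A)

/-- The set of factors of length `n`. -/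
def FactorSet (x : ℕ → A) (n : ℕ) : Set (Fin n → A) :=
  {w : Fin n → A | ∃ j : ℕ, ∀ k : Fin n, w k = x (j + k)}

lemma complexity_eq (n : ℕ) : complexity x n = (FactorSet x n).ncard := rfl

lemma window_mem (j n : ℕ) : (fun k : Fin n => x (j + k)) ∈ FactorSet x n :=
  ⟨j, fun _ => rfl⟩

lemma image_restrict (n : ℕ) :
    (fun w : Fin (n + 1) → A => w ∘ Fin.castSucc) '' FactorSet x (n + 1)
      = FactorSet x n := by
  ext w
  constructor
  · rintro ⟨w', ⟨j, hj⟩, rfl⟩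
    exact ⟨j, fun k => by simp [hj (Fin.castSucc k)]⟩
  · rintro ⟨j, hj⟩
    refine ⟨fun k : Fin (n + 1) => x (j + k), window_mem x j (n + 1), ?_⟩
    funext k
    simp [hj k]

lemma complexity_mono (n : ℕ) : complexity x n ≤ complexity x (n + 1) := by
  rw [complexity_eq, complexity_eq, ← image_restrict x n]
  exact Set.ncard_image_le (Set.toFinite _)

/-- Determinism: if `p(n+1) ≤ p(n)` then equal length-`n` windows extend equally. -/
lemma determinism {n : ℕ} (h : complexity x (n + 1) ≤ complexity x n)
    (j j' : ℕ) (hw : ∀ k < n, x (j + k) = x (j' + k)) :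
    x (j + n) = x (j' + n) := by
  have him : ((fun w : Fin (n + 1) → A => w ∘ Fin.castSucc) ''
      FactorSet x (n + 1)).ncard = (FactorSet x (n + 1)).ncard := by
    refine le_antisymm (Set.ncard_image_le (Set.toFinite _)) ?_
    rw [image_restrict x n]
    exact h
  have hinj := Set.injOn_of_ncard_image_eq him (Set.toFinite _)
  have hkey : (fun k : Fin (n + 1) => x (j + k)) = fun k : Fin (n + 1) => x (j' + k) := by
    apply hinj (window_mem x j (n + 1)) (window_mem x j' (n + 1))
    funext k
    simpa using hw k k.isLt
  have := congrFun hkey (Fin.last n)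
  simpa using this

lemma periodic_of_eq {n : ℕ} (hn : 1 ≤ n)
    (h : complexity x (n + 1) ≤ complexity x n) : UltimatelyPeriodic x := by
  -- pigeonhole on windows of length n
  obtain ⟨a, b, hab, hW⟩ := Finite.exists_ne_map_eq_of_infinite
    (fun j : ℕ => (fun k : Fin n => x (j + k)))
  -- wlog a < b
  obtain ⟨j, j', hjj', hw0⟩ : ∃ j j' : ℕ, j < j' ∧
      ∀ k < n, x (j + k) = x (j' + k) := by
    rcases lt_or_gt_of_ne hab with hlt | hgt
    · exact ⟨a, b, hlt, fun k hk => congrFun hW ⟨k, hk⟩⟩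
    · exact ⟨b, a, hgt, fun k hk => (congrFun hW ⟨k, hk⟩).symm⟩
  have main : ∀ d : ℕ, ∀ k < n, x (j + d + k) = x (j' + d + k) := by
    intro d
    induction d with
    | zero => simpa using hw0
    | succ d ih =>
      intro k hk
      rcases Nat.lt_or_ge (k + 1) n with hk1 | hk1
      · have := ih (k + 1) hk1
        have e1 : j + (d + 1) + k = j + d + (k + 1) := by omega
        have e2 : j' + (d + 1) + k = j' + d + (k + 1) := by omega
        rw [e1, e2]; exact this
      · have hkn : k + 1 = n := by omega
        have := determinism x h (j + d) (j' + d) ih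
        have e1 : j + (d + 1) + k = j + d + n := by omega
        have e2 : j' + (d + 1) + k = j' + d + n := by omega
        rw [e1, e2]; exact this
  refine ⟨j, j' - j, by omega, fun m hm => ?_⟩
  have h0 := main (m - j) 0 (by omega)
  have e1 : j + (m - j) + 0 = m := by omega
  have e2 : j' + (m - j) + 0 = m + (j' - j) := by omega
  rw [e1, e2] at h0
  exact h0.symm

lemma two_le_complexity_one (hx : ¬ UltimatelyPeriodic x) : 2 ≤ complexity x 1 := by
  by_contra hlt
  push_neg at hlt
  have h1 : complexity x 1 ≤ 1 := by omega
  rw [complexity_eq] at h1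
  have hconst : ∀ j : ℕ, x j = x 0 := by
    intro j
    have hmemj : (fun _ : Fin 1 => x j) ∈ FactorSet x 1 := by
      exact ⟨j, fun k => by simp [Fin.fin_one_eq_zero k]⟩
    have hmem0 : (fun _ : Fin 1 => x 0) ∈ FactorSet x 1 := by
      exact ⟨0, fun k => by simp [Fin.fin_one_eq_zero k]⟩
    have := (Set.ncard_le_one (Set.toFinite _)).mp h1 _ hmemj _ hmem0
    exact congrFun this 0
  exact hx ⟨0, 1, one_pos, fun k _ => by rw [hconst (k + 1), hconst k]⟩

end Aux

theorem stmt1 {A : Type*} [Fintype A] (x : ℕ → A)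
    (hx : ¬ UltimatelyPeriodic x) :
    ∀ n : ℕ, 1 ≤ n → n + 1 ≤ complexity x n := by
  intro n hn
  induction n, hn using Nat.le_induction with
  | base => exact two_le_complexity_one x hx
  | succ n hn ih =>
    by_contra hle
    push_neg at hle
    have : complexity x (n + 1) ≤ complexity x n := by omega
    exact hx (periodic_of_eq x hn this)
end

section
/- If x is an infinite word over a finite alphabet which is not ultimately periodic, then there exist arbitrarily large integers n such that r(n, x) ≥ 2n + 1. -/
/-- The set of lengths `m` of prefixes of `x` whose last `n` letters occur
a second time inside the prefix. -/
def returnSet {A : Type*} (x : ℕ → A) (n : ℕ) : Set ℕ :=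
  {m : ℕ | ∃ i : ℕ, i + n < m ∧ ∀ k < n, x (i + k) = x (m - n + k)}

/-- `r(n, x)`: the length of the smallest prefix of `x` containing two
(possibly overlapping) occurrences of some word of length `n`. -/
noncomputable def minReturn {A : Type*} (x : ℕ → A) (n : ℕ) : ℕ :=
  sInf (returnSet x n)

namespace Stmt5Aux

variable {A : Type*}

/-- `x` has period `p` on the interval `[a, b)`. -/
def POn (x : ℕ → A) (a b p : ℕ) : Prop :=
  ∀ t, a ≤ t → t + p < b → x (t + p) = x t

lemma POn.mono {x : ℕ → A} {a b c d p : ℕ} (h : POn x a b p)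
    (hc : a ≤ c) (hd : d ≤ b) : POn x c d p :=
  fun t ht htb => h t (hc.trans ht) (lt_of_lt_of_le htb hd)

/-- Chaining a period `g` inside `[a, c)`. -/
lemma chainPOn {x : ℕ → A} {a c g : ℕ} (hg : 0 < g) (h : POn x a c g) :
    ∀ u s, a ≤ s → s ≤ u → u < c → g ∣ u - s → x u = x s := by
  intro u
  induction u using Nat.strong_induction_on with
  | _ u IH =>
    intro s hs hsu huc hdvd
    rcases eq_or_lt_of_le hsu with rfl | hlt
    · rfl
    · have hgu : g ≤ u - s := Nat.le_of_dvd (by omega) hdvd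
      have h1 : x (u - g + g) = x (u - g) := h (u - g) (by omega) (by omega)
      have h2 : x (u - g) = x s := by
        refine IH (u - g) (by omega) s hs (by omega) (by omega) ?_
        have e : u - g - s = u - s - g := by omega
        rw [e]
        exact Nat.dvd_sub hdvd dvd_rfl
      calc x u = x (u - g + g) := by rw [show u - g + g = u by omega]
        _ = x (u - g) := h1
        _ = x s := h2

/-- If `[a,b)` has period `q` and the prefix `[a,c)` (of length at least `q`)
has period `g` with `g ∣ q`, then all of `[a,b)` has period `g`. -/
lemma prefixExt {x : ℕ → A} {a b c g q : ℕ} (hg : 0 < g) (hq0 : 0 < q)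
    (hgq : g ∣ q) (hq : POn x a b q) (hpre : POn x a c g)
    (hac : a + q ≤ c) (hcb : c ≤ b) : POn x a b g := by
  have hgleq : g ≤ q := Nat.le_of_dvd hq0 hgq
  intro t
  induction t using Nat.strong_induction_on with
  | _ t IH =>
    intro hat htb
    by_cases h1 : t + g < c
    · exact hpre t hat h1
    · push_neg at h1
      by_cases h2 : a + q ≤ t
      · have e1 : x (t - q + q) = x (t - q) := hq (t - q) (by omega) (by omega)
        have e2 : x (t - q + g + q) = x (t - q + g) := hq (t - q + g) (by omega) (by omega)
        have e3 : x (t - q + g) = x (t - q) := IH (t - q) (by omega) (by omega) (by omega)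
        calc x (t + g) = x (t - q + g + q) := by rw [show t - q + g + q = t + g by omega]
          _ = x (t - q + g) := e2
          _ = x (t - q) := e3
          _ = x (t - q + q) := e1.symm
          _ = x t := by rw [show t - q + q = t by omega]
    -- a ≤ t < a + q, and c ≤ t + g
      · push_neg at h2
        have e2 : x (t + g - q + q) = x (t + g - q) := hq (t + g - q) (by omega) (by omega)
        have e3 : x t = x (t + g - q) := by
          refine chainPOn hg hpre t (t + g - q) (by omega) (by omega) (by omega) ?_
          have e : t - (t + g - q) = q - g := by omega
          rw [e]
          exact Nat.dvd_sub hgq dvd_rfl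
        calc x (t + g) = x (t + g - q + q) := by rw [show t + g - q + q = t + g by omega]
          _ = x (t + g - q) := e2
          _ = x t := e3.symm

/-- If `[a,b)` has period `q` and the suffix `[c,b)` (of length at least `q`)
has period `g` with `g ∣ q`, then all of `[a,b)` has period `g`. -/
lemma suffixExt {x : ℕ → A} {a b c g q : ℕ} (hg : 0 < g) (hq0 : 0 < q)
    (hgq : g ∣ q) (hq : POn x a b q) (hsuf : POn x c b g)
    (hcb : c + q ≤ b) (hac : a ≤ c) : POn x a b g := by
  have hgleq : g ≤ q := Nat.le_of_dvd hq0 hgq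
  suffices H : ∀ d t, b - t ≤ d → a ≤ t → t + g < b → x (t + g) = x t by
    intro t hat htb; exact H (b - t) t le_rfl hat htb
  intro d
  induction d with
  | zero => intro t hbt hat htb; omega
  | succ d IH =>
    intro t hbt hat htb
    by_cases h1 : c ≤ t
    · exact hsuf t h1 htb
    · push_neg at h1
      by_cases h2 : t + q + g < b
      · have e1 : x (t + q) = x t := hq t hat (by omega)
        have e2 : x (t + g + q) = x (t + g) := hq (t + g) (by omega) (by omega)
        have e3 : x (t + q + g) = x (t + q) := IH (t + q) (by omega) (by omega) (by omega)
        calc x (t + g) = x (t + g + q) := e2.symm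
          _ = x (t + q + g) := by rw [show t + g + q = t + q + g by omega]
          _ = x (t + q) := e3
          _ = x t := e1
      · push_neg at h2
        have e1 : x (t + q) = x t := hq t hat (by omega)
        have e3 : x (t + q) = x (t + g) := by
          refine chainPOn hg hsuf (t + q) (t + g) (by omega) (by omega) (by omega) ?_
          have e : t + q - (t + g) = q - g := by omega
          rw [e]
          exact Nat.dvd_sub hgq dvd_rfl
        calc x (t + g) = x (t + q) := e3.symm
          _ = x t := e1

/-- Fine and Wilf theorem on intervals (auxiliary, ordered version). -/
lemma fineWilfAux {x : ℕ → A} :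
    ∀ s p q a b, p + q ≤ s → 0 < q → q ≤ p → a + p + q ≤ b + Nat.gcd p q →
      POn x a b p → POn x a b q → POn x a b (Nat.gcd p q) := by
  intro s
  induction s using Nat.strong_induction_on with
  | _ s IH =>
    intro p q a b hs hq hqp hlen hpp hpq
    rcases eq_or_lt_of_le hqp with rfl | hlt
    · simpa [Nat.gcd_self] using hpp
    · -- q < p
      set g := Nat.gcd p q with hgdef
      have hgp : g ∣ p := Nat.gcd_dvd_left p q
      have hgq : g ∣ q := Nat.gcd_dvd_right p q
      have hp : 0 < p := lt_trans hq hlt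
      have hg : 0 < g := Nat.gcd_pos_of_pos_left q hp
      have hgleq : g ≤ q := Nat.le_of_dvd hq hgq
      have hpqg : q + g ≤ p := by
        have hd : g ∣ p - q := Nat.dvd_sub hgp hgq
        have := Nat.le_of_dvd (by omega) hd
        omega
      -- [a, b - q) has periods p - q and q
      have hsub1 : POn x a (b - q) (p - q) := by
        intro t hat htb
        have e1 : x (t + p) = x t := hpp t hat (by omega)
        have e2 : x (t + (p - q) + q) = x (t + (p - q)) :=
          hpq (t + (p - q)) (by omega) (by omega)
        calc x (t + (p - q)) = x (t + (p - q) + q) := e2.symm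
          _ = x (t + p) := by rw [show t + (p - q) + q = t + p by omega]
          _ = x t := e1
      have hsub2 : POn x a (b - q) q := hpq.mono le_rfl (by omega)
      have hgr : Nat.gcd (p - q) q = g := by
        rw [hgdef]; exact Nat.gcd_sub_self_left hlt.le
      have hrec : POn x a (b - q) g := by
        rcases le_total q (p - q) with hle | hle
        · rw [← hgr]
          exact IH (s - 1) (by omega) (p - q) q a (b - q) (by omega) hq hle
            (by rw [hgr]; omega) hsub1 hsub2
        · have hgr2 : Nat.gcd q (p - q) = g := by rw [Nat.gcd_comm]; exact hgr
          rw [← hgr2]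
          exact IH (s - 1) (by omega) q (p - q) a (b - q) (by omega) (by omega) hle
            (by rw [hgr2]; omega) hsub2 hsub1
      -- extend from the prefix [a, b - q) to all of [a, b)
      exact prefixExt hg hq hgq hpq hrec (by omega) (by omega)

/-- Fine and Wilf theorem on intervals. -/
lemma fineWilf {x : ℕ → A} (p q a b : ℕ) (hp : 0 < p) (hq : 0 < q)
    (hlen : a + p + q ≤ b + Nat.gcd p q)
    (hpp : POn x a b p) (hpq : POn x a b q) : POn x a b (Nat.gcd p q) := by
  rcases le_total q p with h | h
  · exact fineWilfAux (p + q) p q a b le_rfl hq h hlen hpp hpq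
  · rw [Nat.gcd_comm]
    refine fineWilfAux (q + p) q p a b le_rfl hp h ?_ hpq hpp
    rw [Nat.gcd_comm]; omega

/-- `returnSet` is always nonempty over a finite alphabet. -/
lemma returnSet_nonempty [Finite A] (x : ℕ → A) (n : ℕ) :
    (returnSet x n).Nonempty := by
  obtain ⟨i, j, hne, hfe⟩ :=
    Finite.exists_ne_map_eq_of_infinite (fun i : ℕ => fun k : Fin n => x (i + k))
  rcases Nat.lt_or_ge i j with hij | hij
  · exact ⟨j + n, i, by omega, fun k hk => by
      have := congrFun hfe ⟨k, hk⟩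
      simpa using this⟩
  · have hij' : j < i := by omega
    exact ⟨i + n, j, by omega, fun k hk => by
      have := congrFun hfe ⟨k, hk⟩
      simpa using this.symm⟩

end Stmt5Aux

open Stmt5Aux in
theorem stmt5 {A : Type*} [Fintype A] (x : ℕ → A)
    (hx : ¬ UltimatelyPeriodic x) :
    ∀ N : ℕ, ∃ n : ℕ, N ≤ n ∧ 2 * n + 1 ≤ minReturn x n := by
  by_contra hcon
  push_neg at hcon
  obtain ⟨N₀, hN₀⟩ := hcon
  apply hx
  -- For every n ≥ N₀ there is a periodic window.
  have hW : ∀ n, N₀ ≤ n → ∃ ip : ℕ × ℕ,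
      0 < ip.2 ∧ ip.1 + ip.2 ≤ n ∧ POn x ip.1 (ip.1 + n + ip.2) ip.2 := by
    intro n hn
    have hmem : minReturn x n ∈ returnSet x n := Nat.sInf_mem (returnSet_nonempty x n)
    have hle : minReturn x n ≤ 2 * n := by
      have := hN₀ n hn
      omega
    set m := minReturn x n with hm
    obtain ⟨i, him, hfac⟩ := hmem
    refine ⟨⟨i, m - n - i⟩, by omega, by omega, ?_⟩
    intro t hat htb
    have hk := hfac (t - i) (by omega)
    have e1 : i + (t - i) = t := by omega
    have e2 : m - n + (t - i) = t + (m - n - i) := by omega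
    rw [e1, e2] at hk
    exact hk.symm
  have hW' : ∀ n, ∃ ip : ℕ × ℕ, N₀ ≤ n →
      0 < ip.2 ∧ ip.1 + ip.2 ≤ n ∧ POn x ip.1 (ip.1 + n + ip.2) ip.2 := by
    intro n
    by_cases hn : N₀ ≤ n
    · obtain ⟨ip, h⟩ := hW n hn
      exact ⟨ip, fun _ => h⟩
    · exact ⟨⟨0, 1⟩, fun h => absurd h hn⟩
  choose F hF using hW'
  set a : ℕ → ℕ := fun n => (F n).1 with ha
  set p : ℕ → ℕ := fun n => (F n).2 with hp
  set b : ℕ → ℕ := fun n => a n + n + p n with hb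
  set S : ℕ → Set ℕ := fun n => {q | 0 < q ∧ POn x (a n) (b n) q} with hS
  set Q : ℕ → ℕ := fun n => sInf (S n) with hQ
  have hSmem : ∀ n, N₀ ≤ n → p n ∈ S n := fun n hn => ⟨(hF n hn).1, (hF n hn).2.2⟩
  have hQmem : ∀ n, N₀ ≤ n → 0 < Q n ∧ POn x (a n) (b n) (Q n) :=
    fun n hn => Nat.sInf_mem ⟨p n, hSmem n hn⟩
  have hQle : ∀ n, N₀ ≤ n → Q n ≤ p n := fun n hn => Nat.sInf_le (hSmem n hn)
  -- consecutive windows have the same minimal period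
  have hstep : ∀ n, N₀ ≤ n → Q n = Q (n + 1) := by
    intro n hn
    have hn1 : N₀ ≤ n + 1 := by omega
    obtain ⟨hQn, hPn⟩ := hQmem n hn
    obtain ⟨hQn1, hPn1⟩ := hQmem (n + 1) hn1
    have hp1 : 0 < p n := (hF n hn).1
    have hp2 : 0 < p (n + 1) := (hF (n + 1) hn1).1
    have hip1 : a n + p n ≤ n := (hF n hn).2.1
    have hip2 : a (n + 1) + p (n + 1) ≤ n + 1 := (hF (n + 1) hn1).2.1
    have hQp1 : Q n ≤ p n := hQle n hn
    have hQp2 : Q (n + 1) ≤ p (n + 1) := hQle (n + 1) hn1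
    set c := max (a n) (a (n + 1)) with hc
    set d := min (b n) (b (n + 1)) with hd
    have hbn : b n = a n + n + p n := rfl
    have hbn1 : b (n + 1) = a (n + 1) + (n + 1) + p (n + 1) := rfl
    -- overlap length
    have hover : c + p n + p (n + 1) ≤ d + 1 := by
      simp only [hc, hd]
      omega
    set g := Nat.gcd (Q n) (Q (n + 1)) with hg
    have hgd1 : g ∣ Q n := Nat.gcd_dvd_left _ _
    have hgd2 : g ∣ Q (n + 1) := Nat.gcd_dvd_right _ _
    have hg0 : 0 < g := Nat.gcd_pos_of_pos_left _ hQn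
    have hg1 : g ≤ Q n := Nat.le_of_dvd hQn hgd1
    have hg2 : g ≤ Q (n + 1) := Nat.le_of_dvd hQn1 hgd2
    have hcd1 : POn x c d (Q n) := hPn.mono (le_max_left _ _) (min_le_left _ _)
    have hcd2 : POn x c d (Q (n + 1)) := hPn1.mono (le_max_right _ _) (min_le_right _ _)
    have hfw : POn x c d g :=
      fineWilf (Q n) (Q (n + 1)) c d hQn hQn1 (by omega) hcd1 hcd2
    have hcd_len1 : c + Q n ≤ d := by omega
    have hcd_len2 : c + Q (n + 1) ≤ d := by omega
    -- extend period g to all of window n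
    have h1 : POn x c (b n) (Q n) := hPn.mono (le_max_left _ _) le_rfl
    have h2 : POn x c (b n) g :=
      prefixExt hg0 hQn hgd1 h1 hfw hcd_len1 (min_le_left _ _)
    have h3 : POn x (a n) (b n) g :=
      suffixExt hg0 hQn hgd1 hPn h2 (le_trans hcd_len1 (min_le_left _ _)) (le_max_left _ _)
    have hQng : Q n ≤ g := Nat.sInf_le ⟨hg0, h3⟩
    -- extend period g to all of window n+1
    have h1' : POn x c (b (n + 1)) (Q (n + 1)) := hPn1.mono (le_max_right _ _) le_rfl
    have h2' : POn x c (b (n + 1)) g :=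
      prefixExt hg0 hQn1 hgd2 h1' hfw hcd_len2 (min_le_right _ _)
    have h3' : POn x (a (n + 1)) (b (n + 1)) g :=
      suffixExt hg0 hQn1 hgd2 hPn1 h2' (le_trans hcd_len2 (min_le_right _ _)) (le_max_right _ _)
    have hQn1g : Q (n + 1) ≤ g := Nat.sInf_le ⟨hg0, h3'⟩
    omega
  have hconst : ∀ n, N₀ ≤ n → Q n = Q N₀ := by
    intro n hn
    induction n, hn using Nat.le_induction with
    | base => rfl
    | succ n hn IH => rw [← hstep n hn, IH]
  refine ⟨N₀, Q N₀, (hQmem N₀ le_rfl).1, ?_⟩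
  intro k hk
  have hk1 : N₀ ≤ k + 1 := by omega
  obtain ⟨hQp, hPk⟩ := hQmem (k + 1) hk1
  have hQeq : Q (k + 1) = Q N₀ := hconst (k + 1) hk1
  have hp1 : 0 < p (k + 1) := (hF (k + 1) hk1).1
  have hip : a (k + 1) + p (k + 1) ≤ k + 1 := (hF (k + 1) hk1).2.1
  have hQp' : Q (k + 1) ≤ p (k + 1) := hQle (k + 1) hk1
  have hbk : b (k + 1) = a (k + 1) + (k + 1) + p (k + 1) := rfl
  have hres := hPk k (by omega) (by omega)
  rw [hQeq] at hres
  exact hres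
end

section
/- Any infinite word x over a finite alphabet which is not ultimately periodic satisfies Rep(x) := limsup_{n→∞} r(n, x)/n ≥ 2. -/
open Filter

/-- `x` has period `p` on the segment `[a, b)`. -/
def PerOn {A : Type*} (x : ℕ → A) (p a b : ℕ) : Prop :=
  ∀ j, a ≤ j → j + p < b → x j = x (j + p)

lemma perOn_mono {A : Type*} {x : ℕ → A} {p a b a' b' : ℕ}
    (h : PerOn x p a b) (ha : a ≤ a') (hb : b' ≤ b) : PerOn x p a' b' :=
  fun j hj hlt => h j (ha.trans hj) (hlt.trans_le hb)

lemma perOn_chain {A : Type*} {x : ℕ → A} {q a b : ℕ} (h : PerOn x q a b) :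
    ∀ m j, a ≤ j → j + q * m < b → x j = x (j + q * m) := by
  intro m
  induction m with
  | zero => intro j _ _; simp
  | succ m IH =>
    intro j hj hlt
    have he : q * (m + 1) = q * m + q := by ring
    rw [he] at hlt ⊢
    have h1 : x j = x (j + q * m) := IH j hj (by omega)
    have h2 : x (j + q * m) = x (j + q * m + q) := h (j + q * m) (by omega) (by omega)
    rw [h1, h2]
    congr 1
    omega

lemma perOn_of_dvd {A : Type*} {x : ℕ → A} {g p a b : ℕ} (hdvd : g ∣ p)
    (h : PerOn x g a b) : PerOn x p a b := by
  obtain ⟨m, rfl⟩ := hdvd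
  intro j hj hlt
  exact perOn_chain h m j hj hlt

/-- Fine–Wilf type lemma: two periods on a long enough common segment give
their gcd as a period. -/
lemma perOn_gcd {A : Type*} {x : ℕ → A} :
    ∀ s p q a b, p + q ≤ s → PerOn x p a b → PerOn x q a b → a + p + q ≤ b →
      PerOn x (Nat.gcd p q) a b := by
  intro s
  induction s with
  | zero =>
    intro p q a b hs hp _ _
    obtain rfl : p = 0 := by omega
    obtain rfl : q = 0 := by omega
    simpa using hp
  | succ s IH =>
    have key : ∀ p q a b, 0 < p → p < q → p + q ≤ s + 1 →
        PerOn x p a b → PerOn x q a b → a + p + q ≤ b →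
        PerOn x (Nat.gcd p q) a b := by
      intro p q a b hp0 hpq hs hp hq hab
      have hq' : PerOn x (q - p) a (b - p) := by
        intro j hj hlt
        have h1 : x j = x (j + q) := hq j hj (by omega)
        have h2 : x (j + (q - p)) = x (j + (q - p) + p) := hp _ (by omega) (by omega)
        rw [show j + (q - p) + p = j + q from by omega] at h2
        rw [h1]
        exact h2.symm
      have hp' : PerOn x p a (b - p) := fun j hj hlt => hp j hj (by omega)
      have hrec : PerOn x (Nat.gcd p (q - p)) a (b - p) :=
        IH p (q - p) a (b - p) (by omega) hp' hq' (by omega)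
      have hgeq : Nat.gcd p (q - p) = Nat.gcd p q := by
        apply Nat.dvd_antisymm
        · refine Nat.dvd_gcd (Nat.gcd_dvd_left _ _) ?_
          have h1 := Nat.gcd_dvd_left p (q - p)
          have h2 := Nat.gcd_dvd_right p (q - p)
          have h3 := Nat.dvd_add h2 h1
          rwa [show q - p + p = q from by omega] at h3
        · exact Nat.dvd_gcd (Nat.gcd_dvd_left _ _)
            (Nat.dvd_sub (Nat.gcd_dvd_right _ _) (Nat.gcd_dvd_left _ _))
      rw [hgeq] at hrec
      have hgqp : Nat.gcd p q ≤ q - p :=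
        Nat.le_of_dvd (by omega)
          (Nat.dvd_sub (Nat.gcd_dvd_right p q) (Nat.gcd_dvd_left p q))
      intro j hj hlt
      set g := Nat.gcd p q with hg
      by_cases hcase : j + g < b - p
      · exact hrec j hj hcase
      · have hjp : a + p ≤ j := by omega
        have e1 : x (j - p) = x j := by
          have h1 := hp (j - p) (by omega) (by omega)
          rwa [show j - p + p = j from by omega] at h1
        have e2 : x (j - p + g) = x (j + g) := by
          have h1 := hp (j - p + g) (by omega) (by omega)
          rwa [show j - p + g + p = j + g from by omega] at h1
        have e3 : x (j - p) = x (j - p + g) := hrec (j - p) (by omega) (by omega)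
        rw [← e1, e3, e2]
    intro p q a b hs hp hq hab
    rcases Nat.lt_trichotomy p q with h | h | h
    · rcases Nat.eq_zero_or_pos p with rfl | hp0
      · simpa using hq
      · exact key p q a b hp0 h hs hp hq hab
    · subst h; simpa using hp
    · rcases Nat.eq_zero_or_pos q with rfl | hq0
      · simpa using hp
      · rw [Nat.gcd_comm]
        exact key q p a b hq0 h (by omega) hq hp (by omega)

/-- Propagation: a period `p` on a long sub-segment of a `q`-periodic segment
extends to the whole segment. -/
lemma perOn_propagate {A : Type*} {x : ℕ → A} {q p a b c d : ℕ}
    (hq0 : 0 < q) (hq : PerOn x q a b) (hp : PerOn x p c d)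
    (hac : a ≤ c) (hdb : d ≤ b) (hlen : c + p + q ≤ d) :
    PerOn x p a b := by
  intro j hj hjb
  rcases le_or_gt c j with hcase | hcase
  · -- j ≥ c : write j = j' + q * m with j' ∈ [c, c + q)
    have hmod : (j - c) % q + q * ((j - c) / q) = j - c := Nat.mod_add_div _ _
    have hrq : (j - c) % q < q := Nat.mod_lt _ hq0
    set r := (j - c) % q with hr
    set m := (j - c) / q with hm
    set j' := c + r with hj'
    have hjj : j = j' + q * m := by omega
    have e1 : x j' = x j := by
      rw [hjj]; exact perOn_chain hq m j' (by omega) (by omega)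
    have e2 : x (j' + p) = x (j + p) := by
      have h2 := perOn_chain hq m (j' + p) (by omega) (by omega)
      rw [h2, hjj]
      congr 1
      omega
    have e3 : x j' = x (j' + p) := hp j' (by omega) (by omega)
    rw [← e1, e3, e2]
  · -- j < c : write j' = j + q * m with j' ∈ [c, c + q)
    have hmod : (c - j + q - 1) % q + q * ((c - j + q - 1) / q) = c - j + q - 1 :=
      Nat.mod_add_div _ _
    have hrq : (c - j + q - 1) % q < q := Nat.mod_lt _ hq0
    set r := (c - j + q - 1) % q with hr
    set m := (c - j + q - 1) / q with hm
    set j' := j + q * m with hj'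
    have hc1 : c ≤ j' := by omega
    have hc2 : j' < c + q := by omega
    have e1 : x j = x j' := perOn_chain hq m j hj (by omega)
    have e2 : x (j + p) = x (j' + p) := by
      have h2 := perOn_chain hq m (j + p) (by omega) (by omega)
      rw [h2]
      congr 1
      omega
    have e3 : x j' = x (j' + p) := hp j' (by omega) (by omega)
    rw [e1, e3, ← e2]

lemma returnSet_nonempty {A : Type*} [Fintype A] (x : ℕ → A) (n : ℕ) :
    (returnSet x n).Nonempty := by
  have hcard : Fintype.card (Fin n → A)
      < Fintype.card (Fin (Fintype.card (Fin n → A) + 1)) := by simp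
  obtain ⟨j1, j2, hne, heq⟩ := Fintype.exists_ne_map_eq_of_card_lt
    (fun j : Fin (Fintype.card (Fin n → A) + 1) => fun k : Fin n => x (j.val + k.val)) hcard
  have hne' : (j1 : ℕ) ≠ (j2 : ℕ) := fun h => hne (Fin.ext h)
  rcases Nat.lt_or_ge (j1 : ℕ) (j2 : ℕ) with hlt | hge
  · refine ⟨(j2 : ℕ) + n, (j1 : ℕ), by omega, fun k hk => ?_⟩
    have h1 := congrFun heq ⟨k, hk⟩
    rw [show (j2 : ℕ) + n - n + k = (j2 : ℕ) + k from by omega]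
    exact h1
  · have hlt2 : (j2 : ℕ) < (j1 : ℕ) := by omega
    refine ⟨(j1 : ℕ) + n, (j2 : ℕ), by omega, fun k hk => ?_⟩
    have h1 := congrFun heq ⟨k, hk⟩
    rw [show (j1 : ℕ) + n - n + k = (j1 : ℕ) + k from by omega]
    exact h1.symm

theorem stmt6 {A : Type*} [Fintype A] (x : ℕ → A)
    (hx : ¬ UltimatelyPeriodic x) :
    (2 : EReal) ≤ limsup (fun n : ℕ => (((minReturn x n : ℝ) / n : ℝ) : EReal)) atTop := by
  by_contra hcon
  push_neg at hcon
  have hev : ∀ᶠ n in atTop, (((minReturn x n : ℝ) / n : ℝ) : EReal) < 2 :=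
    eventually_lt_of_limsup_lt hcon
  obtain ⟨N, hN⟩ := eventually_atTop.1 hev
  have H : ∀ n, N + 1 ≤ n → ∃ i p, 0 < p ∧ i + p + 1 ≤ n ∧ PerOn x p i (i + n + p) := by
    intro n hn
    have hn0 : 0 < n := by omega
    have h2 : (minReturn x n : ℝ) / n < 2 := by
      have h3 := hN n (by omega)
      rw [show (2 : EReal) = ((2 : ℝ) : EReal) from by norm_cast] at h3
      exact EReal.coe_lt_coe_iff.1 h3
    have hlt : minReturn x n < 2 * n := by
      have hnR : (0 : ℝ) < n := by exact_mod_cast hn0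
      have h4 := (div_lt_iff₀ hnR).1 h2
      have h5 : (minReturn x n : ℝ) < 2 * n := by linarith
      exact_mod_cast h5
    have hmem : minReturn x n ∈ returnSet x n := Nat.sInf_mem (returnSet_nonempty x n)
    obtain ⟨i, him, hw⟩ := hmem
    set m := minReturn x n with hm
    refine ⟨i, m - n - i, by omega, by omega, ?_⟩
    intro j hj hjb
    have hk := hw (j - i) (by omega)
    have e1 : i + (j - i) = j := by omega
    have e2 : m - n + (j - i) = j + (m - n - i) := by omega
    rw [e1, e2] at hk
    exact hk
  have H' : ∀ n, ∃ i p, (N + 1 ≤ n → 0 < p ∧ i + p + 1 ≤ n ∧ PerOn x p i (i + n + p)) := by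
    intro n
    by_cases hn : N + 1 ≤ n
    · obtain ⟨i, p, h⟩ := H n hn
      exact ⟨i, p, fun _ => h⟩
    · exact ⟨0, 0, fun h => absurd h hn⟩
  choose I P hP using H'
  have hSne : ({p | ∃ n, N + 1 ≤ n ∧ P n = p} : Set ℕ).Nonempty := ⟨P (N + 1), N + 1, le_refl _, rfl⟩
  obtain ⟨nstar, hnstar, hPn⟩ : sInf {p | ∃ n, N + 1 ≤ n ∧ P n = p} ∈
      {p | ∃ n, N + 1 ≤ n ∧ P n = p} := Nat.sInf_mem hSne
  set pstar := sInf {p | ∃ n, N + 1 ≤ n ∧ P n = p} with hpstar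
  have hmin : ∀ n, N + 1 ≤ n → pstar ≤ P n := fun n hn => Nat.sInf_le ⟨n, hn, rfl⟩
  have hpstar0 : 0 < pstar := hPn ▸ (hP nstar hnstar).1
  have main : ∀ m, PerOn x pstar (I (nstar + m)) (I (nstar + m) + (nstar + m) + P (nstar + m)) := by
    intro m
    induction m with
    | zero =>
      simp only [Nat.add_zero]
      rw [← hPn]
      exact (hP nstar hnstar).2.2
    | succ m IH =>
      have hn1 : N + 1 ≤ nstar + m := by omega
      have hn2 : N + 1 ≤ nstar + m + 1 := by omega
      obtain ⟨hq0, hq1, hqper⟩ := hP (nstar + m + 1) hn2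
      obtain ⟨hp0, hp1, _⟩ := hP (nstar + m) hn1
      have hps_le_p : pstar ≤ P (nstar + m) := hmin _ hn1
      have hps_le_q : pstar ≤ P (nstar + m + 1) := hmin _ hn2
      set n := nstar + m with hn
      set i := I n with hi
      set p := P n with hpd
      set i' := I (n + 1) with hi'
      set q := P (n + 1) with hqd
      set c := max i i' with hc
      set d := min (i + n + p) (i' + (n + 1) + q) with hd
      have hlen : c + pstar + q ≤ d := by omega
      have hIH' : PerOn x pstar c d := perOn_mono IH (le_max_left _ _) (min_le_left _ _)
      have hq' : PerOn x q c d := perOn_mono hqper (le_max_right _ _) (min_le_right _ _)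
      have hg : PerOn x (Nat.gcd pstar q) c d :=
        perOn_gcd (pstar + q) pstar q c d (le_refl _) hIH' hq' hlen
      have hpnew : PerOn x pstar c d := perOn_of_dvd (Nat.gcd_dvd_left _ _) hg
      exact perOn_propagate hq0 hqper hpnew (le_max_right _ _) (min_le_right _ _) hlen
  refine absurd ?_ hx
  refine ⟨nstar, pstar, hpstar0, ?_⟩
  intro k hk
  have hk1 : N + 1 ≤ k + 1 := by omega
  obtain ⟨hq0, hq1, _⟩ := hP (k + 1) hk1
  have hple : pstar ≤ P (k + 1) := hmin (k + 1) hk1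
  have hm : nstar + (k + 1 - nstar) = k + 1 := by omega
  have h := main (k + 1 - nstar)
  rw [hm] at h
  exact (h k (by omega) (by omega)).symm
end

section
/- Any infinite word x over a finite alphabet which is not ultimately periodic satisfies Rep(x) ≥ rep(x) + 1/(1 + rep(x) + rep(x)²), where rep(x) = liminf r(n, x)/n and Rep(x) = limsup r(n, x)/n, provided rep(x) is finite. -/
open Filter

namespace S7

variable {A : Type*} (x : ℕ → A)

/-- two occurrences of a word of length `n` at positions `i` and `i+p`. -/
def Win (i p n : ℕ) : Prop := ∀ k, k < n → x (i + k) = x (i + p + k)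

/-- `x` has period `p` on the interval `[a, b)`. -/
def Per (a b p : ℕ) : Prop := ∀ t, a ≤ t → t + p < b → x t = x (t + p)

lemma win_to_per {i p n : ℕ} (h : Win x i p n) : Per x i (i+p+n) p := by
  intro t ht htp
  have hk : t - i < n := by omega
  have := h (t - i) hk
  have h1 : i + (t - i) = t := by omega
  have h2 : i + p + (t - i) = t + p := by omega
  rwa [h1, h2] at this

lemma per_to_win {a b p : ℕ} (h : Per x a b p) : Win x a p (b - a - p) := by
  intro k hk
  have := h (a + k) (by omega) (by omega)
  have h2 : a + k + p = a + p + k := by omega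
  rwa [h2] at this

lemma per_mono {a b p a' b' : ℕ} (h : Per x a b p) (ha : a ≤ a') (hb : b' ≤ b) :
    Per x a' b' p := fun t ht htp => h t (le_trans ha ht) (lt_of_lt_of_le htp hb)

lemma per_reach {a b g : ℕ} (h : Per x a b g) :
    ∀ d s, a ≤ s → s + d * g < b → x s = x (s + d * g) := by
  intro d
  induction d with
  | zero => intro s _ _; simp
  | succ d ih =>
    intro s hs hsd
    have hexp : (d + 1) * g = d * g + g := by ring
    rw [hexp] at hsd ⊢
    have h1 : x s = x (s + g) := h s hs (by omega)
    have h2 : x (s + g) = x (s + g + d * g) := ih (s + g) (by omega) (by omega)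
    have h3 : s + g + d * g = s + (d * g + g) := by omega
    rw [h1, h2, h3]

/-- Fine–Wilf. -/
lemma fw : ∀ (N p q a b : ℕ), p + q = N → 1 ≤ p → 1 ≤ q → a + p + q ≤ b →
    Per x a b p → Per x a b q → Per x a b (Nat.gcd p q) := by
  intro N
  induction N using Nat.strong_induction_on with
  | _ N ih =>
    intro p q a b hN hp hq hab hPp hPq
    rcases lt_trichotomy p q with hlt | heq | hgt
    · -- p < q : reduce q
      set d := q - p with hd
      have hdpos : 1 ≤ d := by omega
      obtain ⟨e, he⟩ : ∃ e, b = e + p := ⟨b - p, by omega⟩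
      have hPd : Per x a e d := by
        intro t ht htp
        have h1 : x t = x (t + q) := hPq t ht (by omega)
        have h2 : x (t + d) = x (t + d + p) := hPp (t + d) (by omega) (by omega)
        have h3 : t + d + p = t + q := by omega
        rw [h2, h3, ← h1]
      have hPp' : Per x a e p := per_mono x hPp le_rfl (by omega)
      have hIH : Per x a e (Nat.gcd p d) := by
        have := ih (p + d) (by omega) p d a e rfl hp hdpos (by omega) hPp' hPd
        exact this
      have hgcd : Nat.gcd p d = Nat.gcd p q := by
        have h0 : q = d + p := by omega
        rw [h0, Nat.gcd_comm p (d + p), Nat.gcd_add_self_left, Nat.gcd_comm]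
      rw [← hgcd]
      set g := Nat.gcd p d with hg
      have hgd : g ≤ d := Nat.le_of_dvd (by omega) (Nat.gcd_dvd_right p d)
      have hg1 : 1 ≤ g := Nat.gcd_pos_of_pos_left _ (by omega)
      intro t ht htg
      by_cases hcase : t + g < e
      · exact hIH t ht hcase
      · have ht' : a + p ≤ t := by omega
        obtain ⟨u, hu⟩ : ∃ u, t = u + p := ⟨t - p, by omega⟩
        have h1 : x u = x (u + p) := hPp u (by omega) (by omega)
        have h2 : x (u + g) = x (u + g + p) := hPp (u + g) (by omega) (by omega)
        have h3 : x u = x (u + g) := hIH u (by omega) (by omega)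
        have h4 : u + p = t := by omega
        have h5 : u + g + p = t + g := by omega
        rw [h4] at h1; rw [h5] at h2
        rw [← h1, h3, h2]
    · subst heq; rwa [Nat.gcd_self]
    · -- q < p : reduce p
      set d := p - q with hd
      have hdpos : 1 ≤ d := by omega
      obtain ⟨e, he⟩ : ∃ e, b = e + q := ⟨b - q, by omega⟩
      have hPd : Per x a e d := by
        intro t ht htp
        have h1 : x t = x (t + p) := hPp t ht (by omega)
        have h2 : x (t + d) = x (t + d + q) := hPq (t + d) (by omega) (by omega)
        have h3 : t + d + q = t + p := by omega
        rw [h2, h3, ← h1]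
      have hPq' : Per x a e q := per_mono x hPq le_rfl (by omega)
      have hIH : Per x a e (Nat.gcd d q) :=
        ih (d + q) (by omega) d q a e rfl hdpos hq (by omega) hPd hPq'
      have hgcd : Nat.gcd d q = Nat.gcd p q := by
        have h0 : p = d + q := by omega
        rw [h0, Nat.gcd_add_self_left]
      rw [← hgcd]
      set g := Nat.gcd d q with hg
      have hgd : g ≤ d := Nat.le_of_dvd (by omega) (Nat.gcd_dvd_left d q)
      have hg1 : 1 ≤ g := Nat.gcd_pos_of_pos_right _ (by omega)
      intro t ht htg
      by_cases hcase : t + g < e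
      · exact hIH t ht hcase
      · have ht' : a + q ≤ t := by omega
        obtain ⟨u, hu⟩ : ∃ u, t = u + q := ⟨t - q, by omega⟩
        have h1 : x u = x (u + q) := hPq u (by omega) (by omega)
        have h2 : x (u + g) = x (u + g + q) := hPq (u + g) (by omega) (by omega)
        have h3 : x u = x (u + g) := hIH u (by omega) (by omega)
        have h4 : u + q = t := by omega
        have h5 : u + g + q = t + g := by omega
        rw [h4] at h1; rw [h5] at h2
        rw [← h1, h3, h2]

/-- extending a small-period segment inside a long periodic interval -/
lemma prop1 {b e L L' π g : ℕ} (hbig : Per x b e π) (hsm : Per x L L' g)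
    (hbL : b ≤ L) (hL'e : L' ≤ e) (hlen : L + π + g ≤ L') (hπ : 1 ≤ π) (hg : 1 ≤ g) :
    Per x b e g := by
  have E1 : ∀ t, L ≤ t → t + g < e → x t = x (t + g) := by
    intro t
    induction t using Nat.strong_induction_on with
    | _ t ih =>
      intro ht htg
      by_cases hc : t + g < L'
      · exact hsm t ht hc
      · have ht' : L + π ≤ t := by omega
        obtain ⟨u, hu⟩ : ∃ u, t = u + π := ⟨t - π, by omega⟩
        have h1 : x u = x (u + π) := hbig u (by omega) (by omega)
        have h2 : x (u + g) = x (u + g + π) := hbig (u + g) (by omega) (by omega)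
        have h3 : x u = x (u + g) := ih u (by omega) (by omega) (by omega)
        have h4 : u + π = t := by omega
        have h5 : u + g + π = t + g := by omega
        rw [h4] at h1; rw [h5] at h2
        rw [← h1, h3, h2]
  have E2 : ∀ k t, L ≤ t + k → b ≤ t → t + g < e → x t = x (t + g) := by
    intro k
    induction k with
    | zero => intro t h1 h2 h3; exact E1 t (by omega) h3
    | succ k ih =>
      intro t h1 h2 h3
      by_cases hc : L ≤ t
      · exact E1 t hc h3
      · have e1 : x t = x (t + π) := hbig t h2 (by omega)
        have e2 : x (t + g) = x (t + g + π) := hbig (t + g) (by omega) (by omega)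
        have e3 : x (t + π) = x (t + π + g) := ih (t + π) (by omega) (by omega) (by omega)
        have h5 : t + π + g = t + g + π := by omega
        rw [h5] at e3
        rw [e1, e3, ← e2]
  intro t ht htg
  exact E2 L t (by omega) ht htg

lemma glue {b e b' e' g : ℕ} (h1 : Per x b e g) (h2 : Per x b' e' g)
    (hov : b' + g ≤ e) (hee : e ≤ e') : Per x b e' g := by
  intro t ht htg
  by_cases hc : t + g < e
  · exact h1 t ht hc
  · exact h2 t (by omega) (by omega)


section WithFintype
variable [Fintype A]

lemma ret_nonempty (n : ℕ) : (returnSet x n).Nonempty := by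
  have hfin : Finite (Fin n → A) := by infer_instance
  obtain ⟨i, j, hne, heq⟩ := Finite.exists_ne_map_eq_of_infinite
    (fun i : ℕ => (fun k : Fin n => x (i + k)))
  rcases lt_or_gt_of_ne hne with hij | hij
  · refine ⟨j + n, i, by omega, fun k hk => ?_⟩
    have := congrFun heq ⟨k, hk⟩
    simpa [show j + n - n = j by omega] using this
  · refine ⟨i + n, j, by omega, fun k hk => ?_⟩
    have := congrFun heq ⟨k, hk⟩
    simpa [show i + n - n = i by omega] using this.symm

lemma r_mem (n : ℕ) : minReturn x n ∈ returnSet x n :=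
  Nat.sInf_mem (ret_nonempty x n)

lemma exists_wit (n : ℕ) : ∃ a p, 1 ≤ p ∧ a + p + n = minReturn x n ∧ Win x a p n := by
  obtain ⟨i, hi, hmatch⟩ := r_mem x n
  refine ⟨i, minReturn x n - n - i, by omega, by omega, fun k hk => ?_⟩
  have := hmatch k hk
  have h2 : minReturn x n - n + k = i + (minReturn x n - n - i) + k := by omega
  rwa [h2] at this

noncomputable def AW (n : ℕ) : ℕ := (exists_wit x n).choose
noncomputable def PW (n : ℕ) : ℕ := (exists_wit x n).choose_spec.choose

lemma wit_spec (n : ℕ) : 1 ≤ PW x n ∧ AW x n + PW x n + n = minReturn x n ∧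
    Win x (AW x n) (PW x n) n := (exists_wit x n).choose_spec.choose_spec

lemma r_le_of_win {i p n : ℕ} (hp : 1 ≤ p) (h : Win x i p n) :
    minReturn x n ≤ i + p + n := by
  apply Nat.sInf_le
  refine ⟨i, by omega, fun k hk => ?_⟩
  have := h k hk
  have h2 : i + p + n - n + k = i + p + k := by omega
  rwa [h2]

lemma win_mono {i p n n' : ℕ} (h : Win x i p n) (hn : n' ≤ n) : Win x i p n' :=
  fun k hk => h k (by omega)

lemma r_ge (n : ℕ) : n + 1 ≤ minReturn x n := by
  obtain ⟨h1, h2, _⟩ := wit_spec x n; omega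

lemma r_succ (n : ℕ) : minReturn x n + 1 ≤ minReturn x (n+1) := by
  obtain ⟨h1, h2, h3⟩ := wit_spec x (n+1)
  have := r_le_of_win x h1 (win_mono x h3 (Nat.le_succ n))
  omega

lemma r_add (d n : ℕ) : minReturn x n + d ≤ minReturn x (n + d) := by
  induction d with
  | zero => simp
  | succ m ih =>
    have := r_succ x (n + m)
    have h2 : n + (m+1) = (n + m) + 1 := by omega
    rw [h2]
    omega

lemma r_mono {n n' : ℕ} (h : n ≤ n') : minReturn x n + (n' - n) ≤ minReturn x n' := by
  have := r_add x (n' - n) n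
  have h2 : n + (n' - n) = n' := by omega
  rwa [h2] at this

/-- a_scale `v` is a break if `r` jumps by at least 2 -/
def Brk (v : ℕ) : Prop := minReturn x v + 2 ≤ minReturn x (v+1)

lemma infinitely_breaks (hx : ¬ UltimatelyPeriodic x) : ∀ V, ∃ v, V ≤ v ∧ Brk x v := by
  intro V
  by_contra hcon
  push_neg at hcon
  have hlin0 : ∀ d, minReturn x (V + d) = minReturn x V + d := by
    intro d
    induction d with
    | zero => simp
    | succ m ih =>
      have h1 := hcon (V + m) (by omega)
      unfold Brk at h1
      have h2 := r_succ x (V + m)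
      have h3 : V + (m + 1) = (V + m) + 1 := by omega
      rw [h3]
      omega
  have hlin : ∀ w, V ≤ w → minReturn x w = minReturn x V + (w - V) := by
    intro w hw
    have := hlin0 (w - V)
    have h2 : V + (w - V) = w := by omega
    rwa [h2] at this
  set s₀ := minReturn x V - V with hs₀
  have hsum : ∀ w, V ≤ w → AW x w + PW x w = s₀ := by
    intro w hw
    obtain ⟨h1, h2, _⟩ := wit_spec x w
    have := hlin w hw
    have := r_ge x V
    omega
  -- pigeonhole
  classical
  set f : ℕ → Fin (s₀+1) × Fin (s₀+1) := fun w =>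
    (⟨min (AW x (V + w)) s₀, by omega⟩, ⟨min (PW x (V + w)) s₀, by omega⟩) with hf
  obtain ⟨y, hy⟩ := Finite.exists_infinite_fiber f
  have hyinf : (f ⁻¹' {y}).Infinite := Set.infinite_coe_iff.mp hy
  obtain ⟨w₀, hw₀mem, _⟩ := hyinf.exists_gt 0
  set a := AW x (V + w₀) with ha
  set p := PW x (V + w₀) with hp
  have hap : a + p = s₀ := hsum _ (by omega)
  have hp1 : 1 ≤ p := (wit_spec x (V + w₀)).1
  apply hx
  refine ⟨a, p, by omega, fun k hk => ?_⟩
  -- find w in fiber with V + w > k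
  obtain ⟨w, hwmem, hwgt⟩ := hyinf.exists_gt k
  have hsum' : AW x (V + w) + PW x (V + w) = s₀ := hsum _ (by omega)
  have h1 : AW x (V + w) = a ∧ PW x (V + w) = p := by
    have e1 : f w = y := hwmem
    have e0 : f w₀ = y := hw₀mem
    have e2 : f w = f w₀ := by rw [e1, e0]
    have e3 := congrArg (fun z => ((z.1 : ℕ), (z.2 : ℕ))) e2
    simp only [hf] at e3
    have eA : min (AW x (V + w)) s₀ = min a s₀ := by
      simpa using congrArg Prod.fst e3
    have eP : min (PW x (V + w)) s₀ = min p s₀ := by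
      simpa using congrArg Prod.snd e3
    constructor <;> omega
  obtain ⟨hA, hP⟩ := h1
  have hwin := (wit_spec x (V + w)).2.2
  rw [hA, hP] at hwin
  have := hwin (k - a) (by omega)
  have h2 : a + (k - a) = k := by omega
  have h3 : a + p + (k - a) = k + p := by omega
  rw [h2, h3] at this
  exact this.symm


lemma break_f1 {v : ℕ} (hv : Brk x v) :
    x (AW x v + v) ≠ x (minReturn x v) := by
  obtain ⟨hp, heq, hwin⟩ := wit_spec x v
  intro hcon
  have hwin' : Win x (AW x v) (PW x v) (v+1) := by
    intro k hk
    rcases Nat.lt_or_ge k v with hc | hc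
    · exact hwin k hc
    · have hk' : k = v := by omega
      subst hk'
      rw [hcon, heq]
  have := r_le_of_win x hp hwin'
  unfold Brk at hv
  omega

lemma break_f5 {v : ℕ} (hv : Brk x v)
    (hcq : AW x (v+1) + PW x (v+1) ≤ minReturn x v) :
    x (minReturn x v - PW x (v+1)) = x (minReturn x v) := by
  obtain ⟨hq, heq, hwin⟩ := wit_spec x (v+1)
  set c := AW x (v+1); set q := PW x (v+1); set m := minReturn x v
  have hk : m - c - q < v + 1 := by unfold Brk at hv; omega
  have := hwin (m - c - q) hk
  have h1 : c + (m - c - q) = m - q := by omega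
  have h2 : c + q + (m - c - q) = m := by omega
  rwa [h1, h2] at this

lemma break_gcd_contra {v : ℕ} (hv : Brk x v)
    (hq : PW x (v+1) ≤ v)
    (hle : AW x (v+1) + PW x (v+1) + PW x v ≤ minReturn x v) : False := by
  obtain ⟨hp1, heqv, hwinv⟩ := wit_spec x v
  obtain ⟨hq1, heqv1, hwinv1⟩ := wit_spec x (v+1)
  set a := AW x v with ha; set p := PW x v with hp
  set c := AW x (v+1) with hc; set q := PW x (v+1) with hqd
  set m := minReturn x v with hm; set R := minReturn x (v+1) with hR
  have hbrk : m + 2 ≤ R := hv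
  have hPer1 : Per x a m p := by
    have := win_to_per x hwinv
    rwa [heqv] at this
  have hPer2 : Per x c R q := by
    have := win_to_per x hwinv1
    have h2 : c + q + (v+1) = R := heqv1
    rwa [h2] at this
  set L := max a c with hL
  have hLor : L = a ∨ L = c := max_choice a c
  have hPL1 : Per x L m p := per_mono x hPer1 (le_max_left a c) le_rfl
  have hPL2 : Per x L m q := per_mono x (per_mono x hPer2 (le_max_right a c) le_rfl)
    le_rfl (by omega)
  have hlen : L + p + q ≤ m := by rcases hLor with h | h <;> omega
  have hPG : Per x L m (Nat.gcd p q) :=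
    fw x (p+q) p q L m rfl hp1 hq1 hlen hPL1 hPL2
  set g := Nat.gcd p q with hg
  have hg1 : 1 ≤ g := Nat.gcd_pos_of_pos_left _ (by omega)
  have hgp : g ∣ p := Nat.gcd_dvd_left p q
  have hgq : g ∣ q := Nat.gcd_dvd_right p q
  have hf5 : x (m - q) = x m := break_f5 x hv (by omega)
  have hf1 : x (a + v) ≠ x m := by
    have := break_f1 x hv
    rwa [← ha, ← hm] at this
  -- connect m - q and m - p through the gcd period
  have hbridge : x (m - q) = x (m - p) := by
    rcases Nat.le_total q p with hc1 | hc1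
    · obtain ⟨d, hd⟩ : ∃ d, p - q = d * g := by
        obtain ⟨d, hd⟩ := (Nat.dvd_sub hgp hgq)
        exact ⟨d, by rw [hd]; ring⟩
      have := per_reach x hPG d (m - p) (by rcases hLor with h | h <;> omega)
        (by omega)
      have h2 : m - p + d * g = m - q := by omega
      rw [h2] at this
      exact this.symm
    · obtain ⟨d, hd⟩ : ∃ d, q - p = d * g := by
        obtain ⟨d, hd⟩ := (Nat.dvd_sub hgq hgp)
        exact ⟨d, by rw [hd]; ring⟩
      have := per_reach x hPG d (m - q) (by rcases hLor with h | h <;> omega)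
        (by omega)
      have h2 : m - q + d * g = m - p := by omega
      rw [h2] at this
      exact this
  have hmp : m - p = a + v := by omega
  rw [hmp] at hbridge
  exact hf1 (hbridge.symm.trans hf5)

lemma break_R {v : ℕ} (hv : Brk x v) : 2*v + 2 ≤ minReturn x (v+1) := by
  by_contra hcon
  push_neg at hcon
  obtain ⟨hq1, heqv1, _⟩ := wit_spec x (v+1)
  obtain ⟨hp1, heqv, _⟩ := wit_spec x v
  have hbrk : minReturn x v + 2 ≤ minReturn x (v+1) := hv
  exact break_gcd_contra x hv (by omega) (by omega)

/-- the difference-window construction at a break -/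
lemma v3 {v : ℕ} (hv : Brk x v)
    (hcq : AW x (v+1) + PW x (v+1) + 1 ≤ minReturn x v) :
    PW x v ≠ PW x (v+1) ∧
    minReturn x (minReturn x v - AW x (v+1) - PW x (v+1)) +
      min (PW x v) (PW x (v+1)) ≤ minReturn x v := by
  obtain ⟨hp1, heqv, hwinv⟩ := wit_spec x v
  obtain ⟨hq1, heqv1, hwinv1⟩ := wit_spec x (v+1)
  set a := AW x v with ha; set p := PW x v with hp
  set c := AW x (v+1) with hc; set q := PW x (v+1) with hqd
  set m := minReturn x v with hm; set R := minReturn x (v+1) with hR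
  have hbrk : m + 2 ≤ R := hv
  have hcqlb : a + p + 1 ≤ c + q := by omega
  set w := m - c - q with hw
  have hne : p ≠ q := by
    intro hpq
    have hf5 : x (m - q) = x m := break_f5 x hv (by omega)
    have hf1 : x (a + v) ≠ x m := by
      have := break_f1 x hv
      rwa [← ha, ← hm] at this
    have : m - q = a + v := by omega
    rw [this] at hf5
    exact hf1 hf5
  refine ⟨hne, ?_⟩
  have hE : ∀ j, j < w → x (c + j) = x ((c + q - p) + j) := by
    intro j hj
    have h1 : x (c + j) = x (c + q + j) := by
      have := hwinv1 j (by omega)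
      have e : c + q + j = c + q + j := rfl
      exact this
    have h2 : x (a + (c + q + j - p - a)) = x (a + p + (c + q + j - p - a)) := by
      apply hwinv
      omega
    have e1 : a + (c + q + j - p - a) = (c + q - p) + j := by omega
    have e2 : a + p + (c + q + j - p - a) = c + q + j := by omega
    rw [e1, e2] at h2
    rw [h1, ← h2]
  rcases Nat.lt_or_ge p q with hc1 | hc1
  · -- p < q : window (c, q-p, w) ending at m - p
    have hwin2 : Win x c (q - p) w := by
      intro j hj
      have := hE j hj
      have e : c + (q - p) + j = c + q - p + j := by omega
      rw [e]
      exact this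
    have := r_le_of_win x (by omega) hwin2
    have e2 : c + (q - p) + w = m - p := by omega
    rw [e2] at this
    have : min p q = p := by omega
    omega
  · -- q < p (q = p excluded)
    have hqlt : q < p := by omega
    have hwin2 : Win x (c + q - p) (p - q) w := by
      intro j hj
      have := hE j hj
      have e : c + q - p + (p - q) + j = c + j := by omega
      rw [e]
      exact this.symm
    have := r_le_of_win x (by omega) hwin2
    have e2 : c + q - p + (p - q) + w = m - q := by omega
    rw [e2] at this
    have : min p q = q := by omega
    omega


/-- the "tiny period" threshold -/
noncomputable def tau (ρ δ ε : ℝ) (v : ℕ) : ℝ := (ρ - ε) * ((δ + ε) * v + ρ)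

lemma basics {ρ δ ε : ℝ} (hδ : δ * (1 + ρ + ρ^2) = 1) (hρ : (1.81:ℝ) < ρ)
    (hε : ε = δ^2/10) :
    0 < δ ∧ δ ≤ 1/6 ∧ ρ*δ ≤ 0.3 ∧ 0 < ε ∧ ε ≤ δ/60 ∧ ρ*ε ≤ 0.03*δ ∧
      ρ^2*ε ≤ δ/10 ∧ δ + 1.228*ε + 0.228 ≤ 0.228*ρ ∧ 0 < ρ - 1 - ε := by
  have hq : (0:ℝ) < 1 + ρ + ρ^2 := by nlinarith
  have hδpos : 0 < δ := by nlinarith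
  have h6 : (6.08:ℝ) ≤ 1 + ρ + ρ^2 := by nlinarith
  have hδ6 : δ ≤ 1/6 := by nlinarith
  have hρ03 : ρ ≤ 0.3 * (1 + ρ + ρ^2) := by nlinarith [sq_nonneg (ρ - 1.81)]
  have hρδ : ρ * δ ≤ 0.3 := by nlinarith
  have hεpos : 0 < ε := by rw [hε]; positivity
  have hε60 : ε ≤ δ/60 := by rw [hε]; nlinarith
  have hρε : ρ * ε ≤ 0.03 * δ := by rw [hε]; nlinarith
  have hρ2δ : ρ^2 * δ ≤ 1 := by nlinarith
  have hρ2ε : ρ^2 * ε ≤ δ/10 := by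
    rw [hε]
    calc ρ^2 * (δ^2/10) = (ρ^2 * δ) * δ / 10 := by ring
    _ ≤ 1 * δ / 10 := by
        apply div_le_div_of_nonneg_right _ (by norm_num)
        exact mul_le_mul_of_nonneg_right hρ2δ hδpos.le
    _ = δ/10 := by ring
  refine ⟨hδpos, hδ6, hρδ, hεpos, hε60, hρε, hρ2ε, by nlinarith, by nlinarith⟩

set_option maxHeartbeats 1000000 in
lemma key_margin {ρ δ ε : ℝ} (hδ : δ * (1 + ρ + ρ^2) = 1) (hρ : (1.81:ℝ) < ρ)
    (hε : ε = δ^2/10) :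
    1.3*δ ≤ (ρ-1-ε)*(ρ-ε)*(1-δ-ε) - (ρ-1+δ)^2 := by
  obtain ⟨hδpos, hδ6, hρδ, hεpos, hε60, hρε, hρ2ε, hb7, hb8⟩ := basics hδ hρ hε
  have hid : (ρ-1)*ρ*(1-δ) - (ρ-1+δ)^2 = δ*((ρ-1)^2*(ρ+1) - δ) := by
    linear_combination (1 - ρ) * hδ
  have hε1 : ε ≤ 1 := by nlinarith
  have hδ1 : δ ≤ 1 := by nlinarith
  have hD : (ρ-1)*ρ*(1-δ) - (ρ-1-ε)*(ρ-ε)*(1-δ-ε) =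
      ε*(2*ρ-1)*(1-δ) - ε^2*(1-δ) + ε*((ρ-1)*ρ) - ε^2*(2*ρ-1) + ε^3 := by ring
  have h2ρ : (0:ℝ) ≤ 2*ρ-1 := by nlinarith
  have t1 : ε*(2*ρ-1)*(1-δ) ≤ 2*(ρ*ε) := by
    nlinarith [mul_nonneg hεpos.le hδpos.le,
      mul_nonneg (mul_nonneg hεpos.le hδpos.le) h2ρ]
  have t2 : (0:ℝ) ≤ ε^2*(1-δ) := by nlinarith [sq_nonneg ε]
  have hρ0 : (0:ℝ) ≤ ρ := by linarith
  have hερ : (0:ℝ) ≤ ε * ρ := mul_nonneg hεpos.le hρ0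
  have t3 : ε*((ρ-1)*ρ) ≤ ρ^2*ε := by nlinarith [hερ]
  have t4 : (0:ℝ) ≤ ε^2*(2*ρ-1) := by nlinarith [sq_nonneg ε]
  have t5 : ε^3 ≤ ε := by nlinarith [sq_nonneg ε, sq_nonneg (ε-1)]
  have hDb : (ρ-1)*ρ*(1-δ) - (ρ-1-ε)*(ρ-ε)*(1-δ-ε) ≤ 2*(ρ*ε) + ρ^2*ε + ε := by
    rw [hD]; linarith
  have hcube : (0:ℝ) ≤ (ρ-1.81)^2*(ρ-1.81) :=
    mul_nonneg (sq_nonneg _) (by linarith)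
  have hmarg : (ρ-1)^2*(ρ+1) - δ ≥ 1.67 := by nlinarith [sq_nonneg (ρ-1.81), hcube]
  have h1 : δ*((ρ-1)^2*(ρ+1) - δ) ≥ 1.67*δ := by
    have := mul_le_mul_of_nonneg_left hmarg hδpos.le
    nlinarith [this]
  have h2 : 2*(ρ*ε) + ρ^2*ε + ε ≤ 0.2*δ := by linarith
  linarith [hid ▸ h1]



set_option maxHeartbeats 1000000 in
lemma TLnum1 {ρ δ ε rv rv' : ℝ}
    (hδ : δ * (1 + ρ + ρ^2) = 1) (hρ : (1.81:ℝ) < ρ) (hε : ε = δ^2/10)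
    (h0 : (0:ℝ) ≤ rv) (h0' : (0:ℝ) ≤ rv') (hvv : rv ≤ rv')
    (hs1 : (ρ-1-ε) * rv' < (ρ-1+δ) * (rv+1))
    (hV : 100*(1+ρ+ρ^2)^3 ≤ rv) :
    2*((ρ-ε)*((δ+ε)*rv'+ρ)) + 1 ≤ rv ∧
    (ρ-ε)*((δ+ε)*rv+ρ) ≤ (ρ-ε)*((δ+ε)*rv'+ρ) := by
  obtain ⟨hδpos, hδ6, hρδ, hεpos, hε60, hρε, hρ2ε, hb7, hb8⟩ := basics hδ hρ hε
  have hρ0 : (0:ℝ) ≤ ρ := by linarith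
  have hρε' : (ρ-ε)*(δ+ε) ≤ 0.31 := by
    nlinarith [mul_nonneg hεpos.le hδpos.le, sq_nonneg ε]
  have hρερ : (ρ-ε)*ρ ≤ ρ^2 := by nlinarith [mul_nonneg hεpos.le hρ0]
  have hτ' : (ρ-ε)*((δ+ε)*rv'+ρ) ≤ 0.31*rv' + ρ^2 := by
    have t := mul_le_mul_of_nonneg_right hρε' h0'
    nlinarith [t, hρερ]
  have hb7' : (ρ-1+δ) ≤ 1.228*(ρ-1-ε) := by linarith
  have hv'b : rv' < 1.228*(rv+1) := by
    have hvpos : (0:ℝ) ≤ rv+1 := by linarith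
    have h7 : (ρ-1+δ) * (rv+1) ≤ (ρ-1-ε) * (1.228*(rv+1)) := by
      nlinarith [mul_le_mul_of_nonneg_right hb7' hvpos]
    have h8 : (ρ-1-ε)*rv' < (ρ-1-ε) * (1.228*(rv+1)) := lt_of_lt_of_le hs1 h7
    exact lt_of_mul_lt_mul_left h8 hb8.le
  have hq6 : (6.08:ℝ) ≤ 1+ρ+ρ^2 := by nlinarith
  have hcube : 3000*(1+ρ+ρ^2) ≤ 100*(1+ρ+ρ^2)^3 := by nlinarith [hq6, sq_nonneg (1+ρ+ρ^2)]
  have hvρ2 : 3000*ρ^2 ≤ rv := by nlinarith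
  have hv3000 : (3000:ℝ) ≤ rv := by nlinarith
  constructor
  · nlinarith [hτ', hv'b]
  · have hρe : (0:ℝ) ≤ ρ - ε := by linarith
    have hde : (0:ℝ) ≤ δ + ε := by linarith
    have hin : (δ+ε)*rv + ρ ≤ (δ+ε)*rv' + ρ := by
      have := mul_le_mul_of_nonneg_left hvv hde
      linarith
    exact mul_le_mul_of_nonneg_left hin hρe

set_option maxHeartbeats 4000000 in
lemma TLnum2 {ρ δ ε rv rv' ru' : ℝ}
    (hδ : δ * (1 + ρ + ρ^2) = 1) (hρ : (1.81:ℝ) < ρ) (hε : ε = δ^2/10)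
    (h0 : (0:ℝ) ≤ rv) (h0' : (0:ℝ) ≤ rv')
    (hs1 : (ρ-1-ε) * rv' < (ρ-1+δ) * (rv+1))
    (hru' : rv' ≤ ru') (hru'2 : ru' ≤ rv'+1)
    (hV : 100*(1+ρ+ρ^2)^3 ≤ rv) :
    (ρ+δ)*ru' + (ρ-ε)*((δ+ε)*rv+ρ) + 1 ≤ (ρ-ε)*rv + ru' := by
  obtain ⟨hδpos, hδ6, hρδ, hεpos, hε60, hρε, hρ2ε, hb7, hb8⟩ := basics hδ hρ hε
  have hρ0 : (0:ℝ) ≤ ρ := by linarith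
  have hkey := key_margin hδ hρ hε
  have hδQ3 : δ*(100*(1+ρ+ρ^2)^3) = 100*(1+ρ+ρ^2)^2 := by
    linear_combination 100*(1+ρ+ρ^2)^2 * hδ
  have hδv : 100*(1+ρ+ρ^2)^2 ≤ δ*rv := by
    have h := mul_le_mul_of_nonneg_left hV hδpos.le
    rw [hδQ3] at h
    exact h
  have hnn : (0:ℝ) ≤ ρ-1+δ := by linarith
  have hfac : ρ^2 - (ρ-1+δ)^2 = (1-δ)*(2*ρ-1+δ) := by ring
  have hc1 : (ρ-1+δ)^2 ≤ ρ^2 := by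
    have := mul_nonneg (by linarith : (0:ℝ) ≤ 1-δ) (by linarith : (0:ℝ) ≤ 2*ρ-1+δ)
    linarith
  have hkeyv : 1.3*δ*rv ≤ ((ρ-1-ε)*(ρ-ε)*(1-δ-ε) - (ρ-1+δ)^2)*rv :=
    mul_le_mul_of_nonneg_right hkey h0
  have f1 : (ρ-1-ε)*((ρ-1+δ)*rv') ≤ (ρ-1+δ)^2*(rv+1) := by
    nlinarith [mul_le_mul_of_nonneg_left hs1.le hnn]
  have c2 : (ρ-1-ε)*(ρ-1+δ) ≤ ρ^2 := by nlinarith [hεpos, hδpos]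
  have c3 : (ρ-1-ε)*((ρ-ε)*ρ) ≤ ρ^3 := by
    nlinarith [mul_nonneg hεpos.le hρ0, mul_nonneg (mul_nonneg hεpos.le hρ0) hρ0,
      mul_nonneg hεpos.le (mul_nonneg hεpos.le hρ0), sq_nonneg ρ]
  have f3 : (ρ-1+δ)^2 + (ρ-1-ε)*(ρ-1+δ) + (ρ-1-ε)*((ρ-ε)*ρ) + (ρ-1-ε)
      ≤ 3*(1+ρ+ρ^2)^2 := by nlinarith [hc1, c2, c3, sq_nonneg ρ, hρ0]
  have hQ1 : (1:ℝ) ≤ (1+ρ+ρ^2)^2 := by nlinarith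
  have f4 : 3*(1+ρ+ρ^2)^2 + 1 ≤ 1.3*(δ*rv) := by linarith
  have hS : (ρ-1-ε)*((ρ-1+δ)*(rv'+1) + ((ρ-ε)*((δ+ε)*rv+ρ)) + 1)
      ≤ (ρ-1-ε)*((ρ-ε)*rv) := by
    linarith [f1, f3, f4, hkeyv]
  have hG2' : (ρ-1+δ)*(rv'+1) + ((ρ-ε)*((δ+ε)*rv+ρ)) + 1 ≤ (ρ-ε)*rv :=
    le_of_mul_le_mul_left hS hb8
  have hm1 : (ρ-1+δ)*ru' ≤ (ρ-1+δ)*(rv'+1) := mul_le_mul_of_nonneg_left hru'2 hnn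
  nlinarith [hm1, hG2']

set_option maxHeartbeats 1000000 in
lemma TL {ρ δ ε : ℝ} {NL NU : ℕ}
    (hδ : δ * (1 + ρ + ρ^2) = 1) (hρ : (1.81:ℝ) < ρ) (hε : ε = δ^2/10)
    (hLB : ∀ n : ℕ, NL ≤ n → (ρ - ε) * n < (minReturn x n : ℝ))
    (hUB : ∀ n : ℕ, NU ≤ n → (minReturn x n : ℝ) < (ρ + δ) * n)
    {v v' u u' : ℕ}
    (hadj : minReturn x v' + (v+1) = minReturn x (v+1) + v')
    (hvv' : v < v')
    (hu : v ≤ u) (hu2 : u ≤ v+1) (hu' : v' ≤ u') (hu'2 : u' ≤ v'+1) (huu' : u < u')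
    (hπR : (PW x u : ℝ) < tau ρ δ ε v) (hπ'R : (PW x u' : ℝ) < tau ρ δ ε v')
    (hsineq : minReturn x u + u' + 1 ≤ minReturn x u' + u)
    (hNL : NL ≤ v) (hNL' : NL ≤ v') (hNU : NU ≤ v+1) (hNU' : NU ≤ u')
    (hV : 100*(1+ρ+ρ^2)^3 ≤ (v:ℝ)) : False := by
  obtain ⟨hδpos, hδ6, hρδ, hεpos, hε60, hρε, hρ2ε, hb7, hb8⟩ := basics hδ hρ hε
  obtain ⟨hπ1, hbeq, hwinu⟩ := wit_spec x u
  obtain ⟨hπ'1, hbeq', hwinu'⟩ := wit_spec x u'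
  set b := AW x u with hbdef
  set π := PW x u with hπdef
  set e := minReturn x u with hedef
  set b' := AW x u' with hb'def
  set π' := PW x u' with hπ'def
  set e' := minReturn x u' with he'def
  have hee' : e + (u' - u) ≤ e' := by
    have := r_mono x huu'.le
    omega
  have hrev : minReturn x v + (u - v) ≤ e := r_mono x hu
  have hev : (ρ - ε) * v < (e:ℝ) := by
    have h1 := hLB v hNL
    have h2 : ((minReturn x v : ℕ):ℝ) ≤ (e:ℝ) := by
      exact_mod_cast (by omega : minReturn x v ≤ e)
    linarith
  have he' : (e':ℝ) < (ρ + δ) * u' := hUB u' hNU'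
  have hsv : (minReturn x (v+1) : ℝ) < (ρ+δ)*((v:ℝ)+1) := by
    have := hUB (v+1) hNU
    push_cast at this
    linarith
  have hlv' := hLB v' hNL'
  have hs1 : (ρ-1-ε) * (v':ℝ) < (ρ-1+δ) * ((v:ℝ)+1) := by
    have hc : (minReturn x v' : ℝ) + ((v:ℝ)+1) = (minReturn x (v+1) : ℝ) + (v':ℝ) := by
      exact_mod_cast hadj
    nlinarith [hlv', hsv, hc]
  have hvvR : ((v:ℝ)) ≤ (v':ℝ) := by exact_mod_cast hvv'.le
  have hv'u'R : ((v':ℝ)) ≤ (u':ℝ) := by exact_mod_cast hu'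
  have hu'2R : ((u':ℝ)) ≤ (v':ℝ)+1 := by
    have : ((u':ℕ):ℝ) ≤ ((v'+1:ℕ):ℝ) := by exact_mod_cast hu'2
    push_cast at this
    linarith
  obtain ⟨hG1, hτmono⟩ := TLnum1 hδ hρ hε (Nat.cast_nonneg v) (Nat.cast_nonneg v') hvvR hs1 hV
  have hG2 := TLnum2 hδ hρ hε (Nat.cast_nonneg v) (Nat.cast_nonneg v') hs1 hv'u'R hu'2R hV
  -- ℕ bridging
  have nu2π' : 2*π' + 1 ≤ u := by
    have hr : ((2*π' + 1 : ℕ):ℝ) < ((u+1:ℕ):ℝ) := by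
      push_cast
      have hvuR : ((v:ℕ):ℝ) ≤ ((u:ℕ):ℝ) := by exact_mod_cast hu
      unfold tau at hπ'R
      nlinarith [hπ'R, hG1]
    have := Nat.cast_lt.mp hr
    omega
  have nππ' : π + π' + 1 ≤ u' := by
    have hr : ((π + π' + 1 : ℕ):ℝ) < ((u':ℕ):ℝ) := by
      push_cast
      unfold tau at hπR hπ'R
      have h1 : ((v:ℕ):ℝ) ≤ (v':ℝ) := hvvR
      nlinarith [hπR, hπ'R, hτmono, hG1, hv'u'R]
    exact (Nat.cast_lt.mp hr).le
  have nF4 : e' + π + 1 ≤ e + u' := by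
    have hr : ((e' + π + 1 : ℕ):ℝ) < ((e + u' + 1 : ℕ):ℝ) := by
      push_cast
      unfold tau at hπR
      nlinarith [he', hπR, hG2, hev]
    have := Nat.cast_lt.mp hr
    omega
  set M := max b b' with hMdef
  set E₀ := min e (b' + u') with hE₀def
  have hM1 : M = b ∨ M = b' := max_choice b b'
  have hMb : b ≤ M := le_max_left _ _
  have hMb' : b' ≤ M := le_max_right _ _
  have hE1 : E₀ = e ∨ E₀ = b' + u' := min_choice _ _
  have hEe : E₀ ≤ e := min_le_left _ _
  have hEb' : E₀ ≤ b' + u' := min_le_right _ _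
  have hF1 : M + π + π' ≤ E₀ := by
    rcases hM1 with h1 | h1 <;> rcases hE1 with h2 | h2 <;> omega
  set g := Nat.gcd π π' with hgdef
  have hg1 : 1 ≤ g := Nat.gcd_pos_of_pos_left _ (by omega)
  have hgπ : g ≤ π := Nat.le_of_dvd (by omega) (Nat.gcd_dvd_left _ _)
  have hgπ' : g ≤ π' := Nat.le_of_dvd (by omega) (Nat.gcd_dvd_right _ _)
  have hPu : Per x b e π := by
    have := win_to_per x hwinu; rwa [hbeq] at this
  have hPu' : Per x b' e' π' := by
    have := win_to_per x hwinu'; rwa [hbeq'] at this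
  have hPM : Per x M E₀ π := per_mono x hPu hMb hEe
  have hPM' : Per x M E₀ π' := per_mono x hPu' hMb' (by omega)
  have hPG : Per x M E₀ g := fw x (π+π') π π' M E₀ rfl (by omega) (by omega) hF1 hPM hPM'
  have hP1 : Per x b e g := prop1 x hPu hPG hMb hEe (by omega) (by omega) (by omega)
  have hP2 : Per x b' e' g := prop1 x hPu' hPG hMb' (by omega) (by omega) (by omega) (by omega)
  have hPall : Per x b e' g := by
    rcases Nat.le_total b b' with hbb | hbb
    · exact glue x hP1 hP2 (by omega) (by omega)
    · exact per_mono x hP2 hbb le_rfl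
  have hwing : Win x b g (e' - b - g) := per_to_win x hPall
  have hrK : minReturn x (e' - b - g) ≤ e' := by
    have h := r_le_of_win x (by omega) hwing
    omega
  have hKle : e' - b - g ≤ u' := by
    by_contra hKgt
    push_neg at hKgt
    have h1 := r_mono x (show u'+1 ≤ e' - b - g by omega)
    have h2 := r_succ x u'
    omega
  omega


set_option maxHeartbeats 1000000 in
lemma CLASS {ρ δ ε : ℝ} {NL NU : ℕ}
    (hδ : δ * (1 + ρ + ρ^2) = 1) (hρ : (1.81:ℝ) < ρ) (hε : ε = δ^2/10)
    (hLB : ∀ n : ℕ, NL ≤ n → (ρ - ε) * n < (minReturn x n : ℝ))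
    (hUB : ∀ n : ℕ, NU ≤ n → (minReturn x n : ℝ) < (ρ + δ) * n)
    {v : ℕ} (hbv : Brk x v)
    (hNL : NL ≤ v) (hNU : NU ≤ v+1)
    (hNLw : (NL:ℝ) + (ρ+δ) + 2 ≤ (1-δ-ε)*(v:ℝ)) :
    (PW x v : ℝ) < tau ρ δ ε v ∨ (PW x (v+1) : ℝ) < tau ρ δ ε v := by
  obtain ⟨hδpos, hδ6, hρδ, hεpos, hε60, hρε, hρ2ε, hb7, hb8⟩ := basics hδ hρ hε
  obtain ⟨hq1, heq1, _⟩ := wit_spec x (v+1)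
  set p := PW x v with hpdef
  set c := AW x (v+1) with hcdef
  set q := PW x (v+1) with hqdef
  set m := minReturn x v with hmdef
  set R := minReturn x (v+1) with hRdef
  have hm : (ρ - ε) * v < (m:ℝ) := hLB v hNL
  have hR : (R:ℝ) < (ρ+δ)*((v:ℝ)+1) := by
    have := hUB (v+1) hNU
    push_cast at this
    linarith
  have hNL0 : (0:ℝ) ≤ (NL:ℝ) := Nat.cast_nonneg _
  have hr1 : ((R+2:ℕ):ℝ) < ((m+v:ℕ):ℝ) := by
    push_cast
    nlinarith [hNLw, hm, hR, hNL0]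
  have hcq : c + q + 2 ≤ m := by
    have h2 := Nat.cast_lt.mp hr1
    omega
  obtain ⟨hne, hv3le⟩ := v3 x hbv (by omega)
  set w := m - c - q with hwdef
  have hw0 : w + (c + q) = m := by omega
  have hwR : ((w:ℕ):ℝ) + (((c:ℕ):ℝ) + ((q:ℕ):ℝ)) = ((m:ℕ):ℝ) := by exact_mod_cast hw0
  have hcqR : ((c:ℕ):ℝ) + ((q:ℕ):ℝ) + ((v:ℝ)+1) = ((R:ℕ):ℝ) := by
    exact_mod_cast heq1
  have hwNL : NL ≤ w := by
    have hr2 : ((NL:ℕ):ℝ) < ((w:ℕ):ℝ) := by nlinarith [hNLw, hm, hR, hwR, hcqR]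
    exact (Nat.cast_lt.mp hr2).le
  have hLw := hLB w hwNL
  have hminR : ((min p q : ℕ):ℝ) ≤ ((m:ℕ):ℝ) - ((minReturn x w : ℕ):ℝ) := by
    have : ((minReturn x w + min p q : ℕ):ℝ) ≤ ((m:ℕ):ℝ) := by exact_mod_cast hv3le
    push_cast at this ⊢
    linarith
  have hfin : ((min p q:ℕ):ℝ) < tau ρ δ ε v := by
    unfold tau
    have t0 : (ρ-ε)*((w:ℕ):ℝ) = (ρ-ε)*((m:ℕ):ℝ) - (ρ-ε)*(((c:ℕ):ℝ)+((q:ℕ):ℝ)) := by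
      linear_combination (ρ-ε) * hwR
    have hcqlt : ((c:ℕ):ℝ) + ((q:ℕ):ℝ) < (ρ-1+δ)*((v:ℝ)+1) := by nlinarith [hR, hcqR]
    have hρεpos : (0:ℝ) < ρ - ε := by linarith
    have t1 : (ρ-ε)*(((c:ℕ):ℝ)+((q:ℕ):ℝ)) < (ρ-ε)*((ρ-1+δ)*((v:ℝ)+1)) :=
      mul_lt_mul_of_pos_left hcqlt hρεpos
    have t2 : (ρ-1-ε)*((ρ-ε)*(v:ℝ)) < (ρ-1-ε)*((m:ℕ):ℝ) :=
      mul_lt_mul_of_pos_left hm hb8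
    have t3 : (ρ-ε)*((ρ-1+δ)*((v:ℝ)+1)) = (ρ-ε)*((δ+ε)*(v:ℝ)+ρ) +
        (ρ-1-ε)*((ρ-ε)*(v:ℝ)) + (ρ-ε)*(δ-1) := by ring
    have t4 : (ρ-ε)*(δ-1) < 0 := mul_neg_of_pos_of_neg hρεpos (by linarith)
    linarith [hminR, hLw, t0, t1, t2, t3, t4]
  rcases Nat.le_total p q with h | h
  · left
    rwa [min_eq_left h] at hfin
  · right
    rwa [min_eq_right h] at hfin

lemma no_break_lin {v V' : ℕ} (h : ∀ w, v < w → w < V' → ¬ Brk x w) (hvV : v < V') :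
    minReturn x V' + (v+1) = minReturn x (v+1) + V' := by
  have key : ∀ d, v+1+d ≤ V' → minReturn x (v+1+d) = minReturn x (v+1) + d := by
    intro d
    induction d with
    | zero => simp
    | succ k ih =>
      intro hd
      have h1 := ih (by omega)
      have h2 : ¬ Brk x (v+1+k) := h (v+1+k) (by omega) (by omega)
      unfold Brk at h2
      have h3 := r_succ x (v+1+k)
      have h4 : v+1+(k+1) = (v+1+k)+1 := by omega
      rw [h4]
      omega
  have := key (V' - (v+1)) (by omega)
  have h5 : v+1+(V' - (v+1)) = V' := by omega
  rw [h5] at this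
  omega

/-- the next break after a break -/
lemma next_break (hx : ¬ UltimatelyPeriodic x) (v : ℕ) :
    ∃ v', v < v' ∧ Brk x v' ∧ ∀ w, v < w → w < v' → ¬ Brk x w := by
  obtain ⟨w₀, hw₀, hbw₀⟩ := infinitely_breaks x hx (v+1)
  have hne : {w : ℕ | v < w ∧ Brk x w}.Nonempty := ⟨w₀, by omega, hbw₀⟩
  set v' := sInf {w : ℕ | v < w ∧ Brk x w} with hv'
  obtain ⟨h1, h2⟩ := Nat.sInf_mem hne
  refine ⟨v', h1, h2, fun w hw1 hw2 hbw => ?_⟩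
  have hmem : w ∈ {w : ℕ | v < w ∧ Brk x w} := ⟨hw1, hbw⟩
  have := Nat.sInf_le hmem
  omega

end WithFintype
end S7

set_option maxHeartbeats 1000000 in
theorem stmt7 {A : Type*} [Fintype A] (x : ℕ → A)
    (hx : ¬ UltimatelyPeriodic x) (ρ : ℝ)
    (hrep : liminf (fun n : ℕ => (((minReturn x n : ℝ) / n : ℝ) : EReal)) atTop = (ρ : EReal)) :
    ((ρ + 1 / (1 + ρ + ρ ^ 2) : ℝ) : EReal) ≤
      limsup (fun n : ℕ => (((minReturn x n : ℝ) / n : ℝ) : EReal)) atTop := by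
  classical
  by_contra hcon
  push_neg at hcon
  set δ : ℝ := 1 / (1 + ρ + ρ ^ 2) with hδdef
  have hρ0 : (0:ℝ) ≤ ρ := by
    have h0 : (0:EReal) ≤ liminf (fun n : ℕ => (((minReturn x n : ℝ) / n : ℝ) : EReal)) atTop :=
      le_liminf_of_le (by isBoundedDefault)
        (Filter.Eventually.of_forall (fun n => EReal.coe_nonneg.mpr (by positivity)))
    rw [hrep] at h0
    exact_mod_cast h0
  have hQpos : (0:ℝ) < 1 + ρ + ρ ^ 2 := by nlinarith
  have hδeq : δ * (1 + ρ + ρ ^ 2) = 1 := by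
    rw [hδdef]; field_simp
  have hδpos : 0 < δ := by rw [hδdef]; positivity
  have hUB0 : ∀ᶠ n in atTop,
      (((minReturn x n : ℝ) / n : ℝ) : EReal) < ((ρ + δ : ℝ) : EReal) :=
    eventually_lt_of_limsup_lt hcon
  obtain ⟨NU₀, hNU₀⟩ := eventually_atTop.mp hUB0
  set NU := max NU₀ 1 with hNUdef
  have hUB : ∀ n, NU ≤ n → (minReturn x n : ℝ) < (ρ+δ) * n := by
    intro n hn
    have h1 := hNU₀ n (le_trans (le_max_left _ _) hn)
    have h2 : ((minReturn x n : ℝ) / n : ℝ) < ρ + δ := by exact_mod_cast h1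
    have hn1 : (1:ℕ) ≤ n := le_trans (le_max_right _ _) hn
    have hnpos : (0:ℝ) < n := by exact_mod_cast hn1
    calc (minReturn x n : ℝ) = ((minReturn x n : ℝ)/n) * n := by field_simp
    _ < (ρ+δ) * n := mul_lt_mul_of_pos_right h2 hnpos
  by_cases hb2 : ρ + δ ≤ 2
  · obtain ⟨v, hv1, hbv⟩ := S7.infinitely_breaks x hx NU
    have hR := S7.break_R x hbv
    have hub := hUB (v+1) (by omega)
    have hcast : ((2*v+2 : ℕ):ℝ) ≤ (minReturn x (v+1) : ℝ) := by exact_mod_cast hR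
    push_cast at hcast hub
    nlinarith [hcast, hub]
  · push_neg at hb2
    have hρ181 : (1.81:ℝ) < ρ := by
      by_contra hle
      push_neg at hle
      have h181 : (0:ℝ) ≤ 1.81 - ρ := by linarith
      have h1 : 1 ≤ (2-ρ) * (1+ρ+ρ^2) := by
        nlinarith [mul_nonneg h181 (sq_nonneg ρ), mul_nonneg h181 hρ0]
      have h2 : δ ≤ 2-ρ := by
        rw [hδdef, div_le_iff₀ hQpos]
        linarith
      linarith
    set ε : ℝ := δ^2/10 with hεdef
    have hεeq : ε = δ^2/10 := hεdef
    have hεpos : 0 < ε := by rw [hεdef]; positivity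
    have hlt0 : ((ρ - ε : ℝ) : EReal) <
        liminf (fun n : ℕ => (((minReturn x n : ℝ) / n : ℝ) : EReal)) atTop := by
      rw [hrep]
      exact_mod_cast (by linarith : ρ - ε < ρ)
    have hLB0 : ∀ᶠ n in atTop,
        ((ρ - ε : ℝ) : EReal) < (((minReturn x n : ℝ) / n : ℝ) : EReal) :=
      eventually_lt_of_lt_liminf hlt0
    obtain ⟨NL₀, hNL₀⟩ := eventually_atTop.mp hLB0
    set NL := max NL₀ 1 with hNLdef
    have hLB : ∀ n, NL ≤ n → (ρ - ε) * n < (minReturn x n : ℝ) := by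
      intro n hn
      have h1 := hNL₀ n (le_trans (le_max_left _ _) hn)
      have h2 : (ρ - ε) < ((minReturn x n : ℝ) / n : ℝ) := by exact_mod_cast h1
      have hn1 : (1:ℕ) ≤ n := le_trans (le_max_right _ _) hn
      have hnpos : (0:ℝ) < n := by exact_mod_cast hn1
      calc (ρ-ε)*n < (((minReturn x n : ℝ)/n))*n := mul_lt_mul_of_pos_right h2 hnpos
      _ = (minReturn x n : ℝ) := by field_simp
    obtain ⟨hδp, hδ6, hρδ, hεp, hε60, hρε, hρ2ε, hb7, hb8⟩ := S7.basics hδeq hρ181 hεeq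
    set N₁ : ℕ := 5*NL + 5*NU + Nat.ceil (100*(1+ρ+ρ^2)^3) + 10 with hN₁
    obtain ⟨v₁, hv₁ge, hb₁⟩ := S7.infinitely_breaks x hx N₁
    obtain ⟨v₂, h12, hb₂, hnb₁₂⟩ := S7.next_break x hx v₁
    obtain ⟨v₃, h23, hb₃, hnb₂₃⟩ := S7.next_break x hx v₂
    have hadj₁₂ := S7.no_break_lin x hnb₁₂ h12
    have hadj₂₃ := S7.no_break_lin x hnb₂₃ h23
    have hceilN : Nat.ceil (100*(1+ρ+ρ^2)^3) ≤ N₁ := by omega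
    have hVfun : ∀ {v : ℕ}, v₁ ≤ v → 100*(1+ρ+ρ^2)^3 ≤ (v:ℝ) := by
      intro v hv
      have h1 : Nat.ceil (100*(1+ρ+ρ^2)^3) ≤ v := by omega
      exact (Nat.ceil_le).mp h1
    have hq6 : (6.08:ℝ) ≤ 1+ρ+ρ^2 := by nlinarith
    have hQ36 : 36*(1+ρ+ρ^2) ≤ (1+ρ+ρ^2)^3 := by nlinarith [hq6, sq_nonneg (1+ρ+ρ^2)]
    have hρQ : ρ + δ ≤ 1+ρ+ρ^2 := by nlinarith [sq_nonneg ρ]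
    have hNLwf : ∀ {v : ℕ}, v₁ ≤ v → (NL:ℝ) + (ρ+δ) + 2 ≤ (1-δ-ε)*(v:ℝ) := by
      intro v hv
      have h5 : ((5*NL : ℕ):ℝ) ≤ (v:ℝ) := by exact_mod_cast (by omega : 5*NL ≤ v)
      have hQ := hVfun hv
      push_cast at h5
      nlinarith [h5, hQ, hQ36, hρQ]
    have C₁ := S7.CLASS x hδeq hρ181 hεeq hLB hUB hb₁ (by omega) (by omega) (hNLwf le_rfl)
    have C₂ := S7.CLASS x hδeq hρ181 hεeq hLB hUB hb₂ (by omega) (by omega) (hNLwf (by omega))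
    have C₃ := S7.CLASS x hδeq hρ181 hεeq hLB hUB hb₃ (by omega) (by omega) (hNLwf (by omega))
    have hB₁ : minReturn x v₁ + 2 ≤ minReturn x (v₁+1) := hb₁
    have hB₂ : minReturn x v₂ + 2 ≤ minReturn x (v₂+1) := hb₂
    have hB₃ : minReturn x v₃ + 2 ≤ minReturn x (v₃+1) := hb₃
    rcases C₁ with hA₁ | hB₁'
    · rcases C₂ with hA₂ | hB₂'
      · exact S7.TL x hδeq hρ181 hεeq hLB hUB (v := v₁) (v' := v₂) (u := v₁) (u' := v₂)
          hadj₁₂ h12 le_rfl (by omega) le_rfl (by omega) h12 hA₁ hA₂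
          (by omega) (by omega) (by omega) (by omega) (by omega) (hVfun le_rfl)
      · exact S7.TL x hδeq hρ181 hεeq hLB hUB (v := v₁) (v' := v₂) (u := v₁) (u' := v₂+1)
          hadj₁₂ h12 le_rfl (by omega) (by omega) le_rfl (by omega) hA₁ hB₂'
          (by omega) (by omega) (by omega) (by omega) (by omega) (hVfun le_rfl)
    · rcases C₂ with hA₂ | hB₂'
      · rcases C₃ with hA₃ | hB₃'
        · exact S7.TL x hδeq hρ181 hεeq hLB hUB (v := v₂) (v' := v₃) (u := v₂) (u' := v₃)
            hadj₂₃ h23 le_rfl (by omega) le_rfl (by omega) h23 hA₂ hA₃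
            (by omega) (by omega) (by omega) (by omega) (by omega) (hVfun (by omega))
        · exact S7.TL x hδeq hρ181 hεeq hLB hUB (v := v₂) (v' := v₃) (u := v₂) (u' := v₃+1)
            hadj₂₃ h23 le_rfl (by omega) (by omega) le_rfl (by omega) hA₂ hB₃'
            (by omega) (by omega) (by omega) (by omega) (by omega) (hVfun (by omega))
      · exact S7.TL x hδeq hρ181 hεeq hLB hUB (v := v₁) (v' := v₂) (u := v₁+1) (u' := v₂+1)
          hadj₁₂ h12 (by omega) le_rfl (by omega) le_rfl (by omega) hB₁' hB₂'
          (by omega) (by omega) (by omega) (by omega) (by omega) (hVfun le_rfl)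
end

section
/- Let b ≥ 2 be an integer and let x = x_1 x_2 ... be an infinite word over {0, 1, ..., b−1} which is not ultimately periodic. Then the irrationality exponent of ξ = Σ_{k≥1} x_k / b^k satisfies μ(ξ) ≥ rep(x)/(rep(x) − 1), where rep(x) = liminf r(n, x)/n (the right-hand side being interpreted as +∞ if rep(x) = 1). -/
open Filter

/-- The irrationality exponent of `ξ`, as an extended real: the supremum of
all real `μ` such that `|ξ - p/q| < q^(-μ)` has infinitely many rational
solutions `p/q` with `q ≥ 1`. -/
noncomputable def irrationalityExponent (ξ : ℝ) : EReal :=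
  sSup {e : EReal | ∃ μ : ℝ, e = (μ : EReal) ∧
    {pq : ℤ × ℕ | 1 ≤ pq.2 ∧ |ξ - pq.1 / pq.2| < (pq.2 : ℝ) ^ (-μ)}.Infinite}


def prefA (b : ℕ) (x : ℕ → ℕ) (i : ℕ) : ℕ :=
  ∑ k ∈ Finset.range i, x k * b ^ (i - 1 - k)

noncomputable def tailSum (b : ℕ) (x : ℕ → ℕ) (i : ℕ) : ℝ :=
  ∑' k : ℕ, (x (k + i) : ℝ) / b ^ (k + 1)

section
variable {b : ℕ} {x : ℕ → ℕ}

lemma summable_tail (hb : 2 ≤ b) (hx : ∀ k, x k < b) (i : ℕ) :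
    Summable fun k : ℕ => (x (k + i) : ℝ) / b ^ (k + 1) := by
  have hb1 : (1:ℝ) < b := by exact_mod_cast hb.trans_lt' one_lt_two
  have hb0 : (0:ℝ) < b := by linarith
  refine Summable.of_nonneg_of_le (fun k => by positivity) (fun k => ?_)
    (summable_geometric_of_lt_one (r := (b:ℝ)⁻¹) (by positivity) (inv_lt_one_of_one_lt₀ hb1))
  rw [div_le_iff₀ (by positivity)]
  calc (x (k+i) : ℝ) ≤ b := by exact_mod_cast (hx (k+i)).le
  _ = (b:ℝ)⁻¹ ^ k * b ^ (k+1) := by rw [pow_succ, ← mul_assoc, ← mul_pow, inv_mul_cancel₀ hb0.ne', one_pow, one_mul]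

lemma geom_tail (hb : 2 ≤ b) : ∑' k : ℕ, (1:ℝ) / b ^ (k + 1) = ((b:ℝ) - 1)⁻¹ := by
  have hb1 : (1:ℝ) < b := by exact_mod_cast hb.trans_lt' one_lt_two
  have hb0 : (0:ℝ) < b := by linarith
  have h1 : ∀ k : ℕ, (1:ℝ) / b ^ (k+1) = (b:ℝ)⁻¹ * ((b:ℝ)⁻¹)^k := by
    intro k; rw [pow_succ, inv_pow, one_div, mul_inv, mul_comm]
  rw [tsum_congr h1, tsum_mul_left, tsum_geometric_of_lt_one (by positivity) (inv_lt_one_of_one_lt₀ hb1)]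
  rw [eq_comm, inv_eq_iff_eq_inv, eq_comm]
  field_simp

lemma tail_nonneg (hb : 2 ≤ b) (hx : ∀ k, x k < b) (i : ℕ) : 0 ≤ tailSum b x i :=
  tsum_nonneg fun k => by positivity

lemma tail_lt_one (hb : 2 ≤ b) (hx : ∀ k, x k < b) (hnp : ¬ UltimatelyPeriodic x) (i : ℕ) :
    tailSum b x i < 1 := by
  have hb1 : (1:ℝ) < b := by exact_mod_cast hb.trans_lt' one_lt_two
  have hb0 : (0:ℝ) < b := by linarith
  -- exists a digit < b-1
  have hdig : ∃ j, x (j + i) + 1 < b := by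
    by_contra h
    push_neg at h
    exact hnp ⟨i, 1, one_pos, fun k hk => by
      have h1 := h (k - i); have h2 := h (k + 1 - i)
      have e1 : k - i + i = k := by omega
      have e2 : k + 1 - i + i = k + 1 := by omega
      rw [e1] at h1; rw [e2] at h2
      have := hx k; have := hx (k+1); omega⟩
  obtain ⟨j, hj⟩ := hdig
  have hsum2 : Summable fun k : ℕ => ((b:ℝ) - 1) / b ^ (k + 1) := by
    have := (summable_geometric_of_lt_one (r := (b:ℝ)⁻¹) (by positivity)
      (inv_lt_one_of_one_lt₀ hb1)).mul_left (((b:ℝ)-1) * (b:ℝ)⁻¹)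
    refine this.congr fun k => ?_
    rw [inv_pow, pow_succ]; ring
  have hlt : tailSum b x i < ∑' k : ℕ, ((b:ℝ) - 1) / b ^ (k + 1) := by
    refine Summable.tsum_lt_tsum (i := j) (fun k => ?_) ?_ (summable_tail hb hx i) hsum2
    · have h1 : ((x (k+i) : ℝ)) ≤ (b:ℝ) - 1 := by
        have := hx (k + i); push_cast
        have : ((x (k+i) : ℝ)) + 1 ≤ b := by exact_mod_cast this
        linarith
      gcongr
    · have h1 : ((x (j+i) : ℝ)) < (b:ℝ) - 1 := by
        have : ((x (j+i) : ℝ)) + 1 < b := by exact_mod_cast hj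
        linarith
      gcongr
  have heq : ∑' k : ℕ, ((b:ℝ) - 1) / b ^ (k + 1) = 1 := by
    have h2 : ∀ k:ℕ, ((b:ℝ)-1)/b^(k+1) = ((b:ℝ)-1) * ((1:ℝ)/b^(k+1)) := fun k => by ring
    rw [tsum_congr h2, tsum_mul_left, geom_tail hb, mul_inv_cancel₀ (by linarith)]
  linarith

lemma tail_rec (hb : 2 ≤ b) (hx : ∀ k, x k < b) (i : ℕ) :
    (b:ℝ) * tailSum b x i = x i + tailSum b x (i + 1) := by
  have hb0 : (0:ℝ) < b := by positivity
  unfold tailSum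
  rw [Summable.tsum_eq_zero_add (summable_tail hb hx i)]
  rw [mul_add]
  congr 1
  · simp [pow_one]
    field_simp
  · rw [← tsum_mul_left]
    refine tsum_congr fun k => ?_
    have e : k + 1 + i = k + (i + 1) := by omega
    rw [e, pow_succ]
    field_simp

lemma tail_step (hb : 2 ≤ b) (hx : ∀ k, x k < b) (hnp : ¬ UltimatelyPeriodic x)
    {i i' : ℕ} (h : tailSum b x i = tailSum b x i') :
    x i = x i' ∧ tailSum b x (i + 1) = tailSum b x (i' + 1) := by
  have h1 := tail_rec hb hx i
  have h2 := tail_rec hb hx i'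
  have e : (x i : ℝ) + tailSum b x (i+1) = (x i' : ℝ) + tailSum b x (i'+1) := by
    rw [← h1, ← h2, h]
  have hfl : ∀ j : ℕ, ⌊(x j : ℝ) + tailSum b x (j+1)⌋ = (x j : ℤ) := by
    intro j
    rw [Int.floor_eq_iff]
    constructor
    · push_cast; linarith [tail_nonneg hb hx (j+1)]
    · push_cast; linarith [tail_lt_one hb hx hnp (j+1)]
  have hx' : (x i : ℤ) = (x i' : ℤ) := by rw [← hfl i, ← hfl i', e]
  have hxx : x i = x i' := by exact_mod_cast hx'
  refine ⟨hxx, ?_⟩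
  have : (x i : ℝ) = (x i' : ℝ) := by exact_mod_cast hxx
  linarith

lemma tail_eq_digits (hb : 2 ≤ b) (hx : ∀ k, x k < b) (hnp : ¬ UltimatelyPeriodic x)
    {i i' : ℕ} (h : tailSum b x i = tailSum b x i') :
    ∀ k, x (k + i) = x (k + i') := by
  have main : ∀ k, tailSum b x (k + i) = tailSum b x (k + i') := by
    intro k
    induction k with
    | zero => simpa using h
    | succ k ih => simpa [Nat.add_right_comm k i 1, Nat.add_right_comm k i' 1] using
        (tail_step hb hx hnp ih).2
  exact fun k => (tail_step hb hx hnp (main k)).1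

lemma prefA_succ (i : ℕ) : prefA b x (i + 1) = b * prefA b x i + x i := by
  unfold prefA
  rw [Finset.sum_range_succ, Finset.mul_sum]
  simp only [Nat.add_sub_cancel, Nat.sub_self]
  congr 1
  · refine Finset.sum_congr rfl fun k hk => ?_
    have hk' : k < i := Finset.mem_range.1 hk
    have e : i - k = (i - 1 - k) + 1 := by omega
    rw [e, pow_succ]; ring
  · simp

lemma pow_mul_xi (hb : 2 ≤ b) (hx : ∀ k, x k < b) (i : ℕ) :
    (b:ℝ) ^ i * tailSum b x 0 = (prefA b x i : ℝ) + tailSum b x i := by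
  induction i with
  | zero => simp [prefA]
  | succ i ih =>
    rw [pow_succ, mul_comm ((b:ℝ)^i) (b:ℝ), mul_assoc, ih, mul_add, tail_rec hb hx i,
      prefA_succ]
    push_cast
    ring

lemma xi_irrational (hb : 2 ≤ b) (hx : ∀ k, x k < b) (hnp : ¬ UltimatelyPeriodic x)
    (p : ℤ) (q : ℕ) (hq : 1 ≤ q) : tailSum b x 0 ≠ (p : ℝ) / q := by
  intro heq
  have hq0 : (0:ℝ) < q := by exact_mod_cast hq
  have key : ∀ i : ℕ, (q : ℝ) * tailSum b x i = ((b:ℤ)^i * p - q * prefA b x i : ℤ) := by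
    intro i
    have h1 := pow_mul_xi hb hx (x := x) i
    rw [heq] at h1
    push_cast
    field_simp at h1 ⊢
    linarith
  -- q * tail i is an integer in [0, q)
  have hfin : ∀ i : ℕ, ∃ g : Fin q, (q : ℝ) * tailSum b x i = (g : ℝ) := by
    intro i
    set z : ℤ := (b:ℤ)^i * p - q * prefA b x i with hz
    have h1 : (0:ℝ) ≤ (z:ℝ) := by
      rw [← key i]; exact mul_nonneg hq0.le (tail_nonneg hb hx i)
    have h2 : (z:ℝ) < q := by
      rw [← key i]
      calc (q:ℝ) * tailSum b x i < q * 1 := by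
            exact mul_lt_mul_of_pos_left (tail_lt_one hb hx hnp i) hq0
      _ = q := mul_one _
    have h1' : 0 ≤ z := by exact_mod_cast h1
    have h2' : z < q := by exact_mod_cast h2
    refine ⟨⟨z.toNat, by omega⟩, ?_⟩
    rw [key i]
    simp only [Fin.val_mk, ← hz]
    exact_mod_cast (Int.toNat_of_nonneg h1').symm
  choose g hg using hfin
  obtain ⟨i, i', hne, hgeq⟩ := Finite.exists_ne_map_eq_of_infinite g
  wlog hlt : i < i' generalizing i i'
  · exact this i' i hne.symm hgeq.symm (by omega)
  have hteq : tailSum b x i = tailSum b x i' := by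
    have hv : ((g i : ℕ) : ℝ) = ((g i' : ℕ) : ℝ) := by rw [hgeq]
    exact mul_left_cancel₀ (ne_of_gt hq0) ((hg i).trans (hv.trans (hg i').symm))
  have hdig := tail_eq_digits hb hx hnp hteq
  exact hnp ⟨i, i' - i, by omega, fun k hk => by
    have e1 : k - i + i = k := by omega
    have e2 : k - i + i' = k + (i' - i) := by omega
    have := hdig (k - i)
    rw [e1, e2] at this
    omega⟩

lemma tail_diff_small (hb : 2 ≤ b) (hx : ∀ k, x k < b) {n i T : ℕ}
    (per : ∀ k < n, x (i + k) = x (i + T + k)) :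
    |tailSum b x (i + T) - tailSum b x i| ≤ 1 / (b:ℝ) ^ n := by
  have hb1 : (1:ℝ) < b := by exact_mod_cast hb.trans_lt' one_lt_two
  have hb0 : (0:ℝ) < b := by linarith
  set d : ℕ → ℝ := fun k => (x (k + (i + T)) : ℝ) / b ^ (k + 1) - (x (k + i) : ℝ) / b ^ (k + 1)
    with hd
  have hsd : Summable d := (summable_tail hb hx (i+T)).sub (summable_tail hb hx i)
  have hdiff : tailSum b x (i + T) - tailSum b x i = ∑' k, d k :=
    (Summable.tsum_sub (summable_tail hb hx (i+T)) (summable_tail hb hx i)).symm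
  rw [hdiff]
  have habs : |∑' k, d k| ≤ ∑' k, |d k| := by
    simpa using norm_tsum_le_tsum_norm (f := d) (by simpa using hsd.abs)
  refine habs.trans ?_
  have hzero : ∀ k < n, |d k| = 0 := by
    intro k hk
    have := per k hk
    simp [hd, Nat.add_comm k i, Nat.add_comm k (i + T), this]
  have hsa : Summable fun k => |d k| := hsd.abs
  rw [← Summable.sum_add_tsum_nat_add n hsa]
  have h0 : ∑ k ∈ Finset.range n, |d k| = 0 :=
    Finset.sum_eq_zero fun k hk => hzero k (Finset.mem_range.1 hk)
  rw [h0, zero_add]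
  -- bound the tail
  have hbound : ∀ k : ℕ, |d (k + n)| ≤ ((b:ℝ) - 1) / b ^ (k + n + 1) := by
    intro k
    have h1 : ∀ j : ℕ, (0:ℝ) ≤ (x j : ℝ) / b ^ (k + n + 1) := fun j => by positivity
    have h2 : ∀ j : ℕ, (x j : ℝ) / b ^ (k + n + 1) ≤ ((b:ℝ) - 1) / b ^ (k + n + 1) := by
      intro j
      have : ((x j : ℝ)) + 1 ≤ b := by exact_mod_cast hx j
      gcongr
      linarith
    rw [hd]
    simp only
    rw [abs_sub_le_iff]
    constructor <;> [skip; skip] <;>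
      · have a1 := h1 (k + n + (i + T)); have a2 := h2 (k + n + (i + T))
        have a3 := h1 (k + n + i); have a4 := h2 (k + n + i)
        linarith
  have hsum2 : Summable fun k : ℕ => ((b:ℝ) - 1) / b ^ (k + n + 1) := by
    have := ((summable_geometric_of_lt_one (r := (b:ℝ)⁻¹) (by positivity)
      (inv_lt_one_of_one_lt₀ hb1)).mul_left (((b:ℝ)-1) * ((b:ℝ)^n)⁻¹ * (b:ℝ)⁻¹))
    refine this.congr fun k => ?_
    rw [inv_pow, pow_add, pow_add, pow_one]
    ring
  have hle2 : ∑' k, |d (k + n)| ≤ ∑' k : ℕ, ((b:ℝ) - 1) / b ^ (k + n + 1) :=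
    Summable.tsum_le_tsum hbound (hsa.comp_injective (add_left_injective n)) hsum2
  refine hle2.trans ?_
  have heq2 : ∀ k : ℕ, ((b:ℝ) - 1) / b ^ (k + n + 1) = (((b:ℝ)-1) * ((b:ℝ)^n)⁻¹) * ((1:ℝ) / b ^ (k + 1)) := by
    intro k
    rw [pow_add, pow_add, pow_one]
    ring
  rw [tsum_congr heq2, tsum_mul_left, geom_tail hb]
  rw [mul_comm (((b:ℝ)-1)) _, mul_assoc, mul_inv_cancel₀ (by linarith), mul_one]
  rw [one_div]
end


lemma minReturn_spec {A : Type*} {x : ℕ → A} {n : ℕ} (h : 0 < minReturn x n) :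
    ∃ i T : ℕ, 0 < T ∧ minReturn x n = i + T + n ∧ ∀ k < n, x (i + k) = x (i + T + k) := by
  have hne : (returnSet x n).Nonempty := by
    by_contra hemp
    rw [Set.not_nonempty_iff_eq_empty] at hemp
    rw [minReturn, hemp, Nat.sInf_empty] at h
    exact absurd h (lt_irrefl 0)
  have hmem : minReturn x n ∈ returnSet x n := Nat.sInf_mem hne
  obtain ⟨i, hin, per⟩ := hmem
  refine ⟨i, minReturn x n - n - i, by omega, by omega, fun k hk => ?_⟩
  have e : i + (minReturn x n - n - i) + k = minReturn x n - n + k := by omega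
  rw [e]
  exact per k hk

lemma approx (hb : 2 ≤ b) (hx : ∀ k, x k < b) {n i T : ℕ} (hT : 0 < T)
    (per : ∀ k < n, x (i + k) = x (i + T + k)) :
    |(((b ^ i * (b ^ T - 1) : ℕ)) : ℝ) * tailSum b x 0 -
      ((prefA b x (i + T) : ℤ) - (prefA b x i : ℤ))| ≤ 1 / (b:ℝ) ^ n := by
  have hb1 : (1:ℝ) < b := by exact_mod_cast hb.trans_lt' one_lt_two
  have hbT : 1 ≤ b ^ T := Nat.one_le_pow _ _ (by omega)
  have hcast : (((b ^ i * (b ^ T - 1) : ℕ)) : ℝ) = (b:ℝ) ^ i * ((b:ℝ) ^ T - 1) := by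
    push_cast [Nat.cast_sub hbT]
    ring
  have h1 := pow_mul_xi hb hx (x := x) i
  have h2 := pow_mul_xi hb hx (x := x) (i + T)
  have e : (((b ^ i * (b ^ T - 1) : ℕ)) : ℝ) * tailSum b x 0 -
      ((prefA b x (i + T) : ℤ) - (prefA b x i : ℤ)) =
      tailSum b x (i + T) - tailSum b x i := by
    rw [hcast]
    have : (b:ℝ) ^ i * ((b:ℝ) ^ T - 1) * tailSum b x 0 =
        (b:ℝ) ^ (i + T) * tailSum b x 0 - (b:ℝ) ^ i * tailSum b x 0 := by
      rw [pow_add]; ring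
    rw [this, h1, h2]
    push_cast
    ring
  rw [e]
  exact tail_diff_small hb hx per


lemma key_infinite {b : ℕ} {x : ℕ → ℕ} (hb : 2 ≤ b) (hx : ∀ k, x k < b) (hnp : ¬ UltimatelyPeriodic x)
    (μ : ℝ) (hμ : 1 ≤ μ)
    (hfreq : ∃ᶠ n in atTop, 0 < minReturn x n ∧
      ((minReturn x n : ℝ) - n) * (μ - 1) < n) :
    {pq : ℤ × ℕ | 1 ≤ pq.2 ∧
      |(∑' k : ℕ, (x k : ℝ) / b ^ (k + 1)) - pq.1 / pq.2| < (pq.2 : ℝ) ^ (-μ)}.Infinite := by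
  have hb1 : (1:ℝ) < b := by exact_mod_cast hb.trans_lt' one_lt_two
  have hb0 : (0:ℝ) < b := by linarith
  have hxi : (∑' k : ℕ, (x k : ℝ) / b ^ (k + 1)) = tailSum b x 0 :=
    tsum_congr fun k => by simp
  set ξ := tailSum b x 0 with hξ
  rw [hxi]
  set S := {pq : ℤ × ℕ | 1 ≤ pq.2 ∧ |ξ - pq.1 / pq.2| < (pq.2 : ℝ) ^ (-μ)} with hS
  by_contra hinf
  rw [Set.not_infinite] at hinf
  set Fd : Finset ℝ := insert (1:ℝ)
    (hinf.toFinset.image fun pq => |ξ - (pq.1 : ℝ) / pq.2|) with hFd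
  have hFdne : Fd.Nonempty := ⟨1, Finset.mem_insert_self _ _⟩
  have hεpos : 0 < Fd.min' hFdne := by
    have hmem := Fd.min'_mem hFdne
    rcases Finset.mem_insert.1 hmem with h1 | h2
    · linarith
    · rw [Finset.mem_image] at h2
      obtain ⟨pq, hpq, hval⟩ := h2
      rw [Set.Finite.mem_toFinset] at hpq
      have hq1 : 1 ≤ pq.2 := hpq.1
      have hne : ξ ≠ (pq.1 : ℝ) / pq.2 := xi_irrational hb hx hnp pq.1 pq.2 hq1
      rw [← hval]
      exact abs_pos.2 (sub_ne_zero.2 hne)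
  obtain ⟨N, hN⟩ := exists_pow_lt_of_lt_one hεpos (inv_lt_one_of_one_lt₀ hb1)
  rw [frequently_atTop] at hfreq
  obtain ⟨n, hnN, h0, hcond⟩ := hfreq N
  obtain ⟨i, T, hT, hm, per⟩ := minReturn_spec h0
  set q : ℕ := b ^ i * (b ^ T - 1) with hq
  set p : ℤ := (prefA b x (i + T) : ℤ) - (prefA b x i : ℤ) with hp
  have hbT2 : 2 ≤ b ^ T := by
    calc 2 = 2 ^ 1 := rfl
    _ ≤ 2 ^ T := Nat.pow_le_pow_right (by norm_num) hT
    _ ≤ b ^ T := Nat.pow_le_pow_left hb T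
  have hq1 : 1 ≤ q := by
    have : 1 ≤ b ^ i := Nat.one_le_pow _ _ (by omega)
    calc 1 = 1 * 1 := rfl
    _ ≤ b ^ i * (b ^ T - 1) := Nat.mul_le_mul this (by omega)
  have hq0 : (0:ℝ) < q := by exact_mod_cast hq1
  have happrox0 := approx hb hx hT per
  have happrox : |(q:ℝ) * ξ - (p:ℝ)| ≤ 1 / (b:ℝ) ^ n := by
    have e1 : ((p:ℤ):ℝ) = ((prefA b x (i+T) : ℤ):ℝ) - ((prefA b x i : ℤ):ℝ) := by
      rw [hp]; push_cast; ring
    rw [e1, hξ, hq]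
    exact happrox0
  have hdiv : |ξ - (p:ℝ) / q| ≤ 1 / (b:ℝ) ^ n * ((q:ℝ))⁻¹ := by
    have e : ξ - (p:ℝ) / q = ((q:ℝ) * ξ - p) / q := by field_simp
    rw [e, abs_div, abs_of_pos hq0, div_eq_mul_inv]
    exact mul_le_mul_of_nonneg_right happrox (by positivity)
  -- q ≤ b ^ (i + T)
  have hqle : (q:ℝ) ≤ (b:ℝ) ^ (i + T) := by
    have : q ≤ b ^ (i + T) := by
      rw [hq, pow_add]
      exact Nat.mul_le_mul_left _ (by omega)
    exact_mod_cast this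
  -- condition rewrite
  have hcond' : ((i + T : ℕ) : ℝ) * (μ - 1) < (n : ℝ) := by
    have : ((minReturn x n : ℝ)) = ((i + T + n : ℕ) : ℝ) := by rw [hm]
    rw [this] at hcond
    push_cast at hcond ⊢
    linarith
  have h3 : (q:ℝ) ^ (μ - 1) < (b:ℝ) ^ n := by
    calc (q:ℝ) ^ (μ - 1) ≤ ((b:ℝ) ^ (i + T)) ^ (μ - 1) :=
          Real.rpow_le_rpow hq0.le hqle (by linarith)
    _ = (b:ℝ) ^ (((i + T : ℕ) : ℝ) * (μ - 1)) := by
          rw [← Real.rpow_natCast (b:ℝ) (i + T), ← Real.rpow_mul hb0.le]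
    _ < (b:ℝ) ^ ((n : ℕ) : ℝ) := (Real.rpow_lt_rpow_left_iff hb1).2 hcond'
    _ = (b:ℝ) ^ n := Real.rpow_natCast _ _
  have h4 : 1 / (b:ℝ) ^ n < (q:ℝ) ^ (1 - μ) := by
    have hql : (0:ℝ) < (q:ℝ) ^ (μ - 1) := Real.rpow_pos_of_pos hq0 _
    rw [div_lt_iff₀ (by positivity)]
    rw [← Real.rpow_natCast (b:ℝ) n] at h3 ⊢
    calc (1:ℝ) = (q:ℝ) ^ (1 - μ) * (q:ℝ) ^ (μ - 1) := by
          rw [← Real.rpow_add hq0]; norm_num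
    _ < (q:ℝ) ^ (1 - μ) * (b:ℝ) ^ ((n:ℕ):ℝ) :=
          mul_lt_mul_of_pos_left h3 (Real.rpow_pos_of_pos hq0 (1 - μ))
  have hmemS : (p, q) ∈ S := by
    refine ⟨hq1, ?_⟩
    simp only
    calc |ξ - (p:ℝ) / q| ≤ 1 / (b:ℝ) ^ n * ((q:ℝ))⁻¹ := hdiv
    _ < (q:ℝ) ^ (1 - μ) * ((q:ℝ))⁻¹ := by
          have : (0:ℝ) < ((q:ℝ))⁻¹ := by positivity
          exact mul_lt_mul_of_pos_right h4 this
    _ = (q:ℝ) ^ (-μ) := by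
          rw [← Real.rpow_neg_one (q:ℝ), ← Real.rpow_add hq0]
          congr 1
          ring
  -- contradiction with ε
  have hεle : Fd.min' hFdne ≤ |ξ - (p:ℝ) / q| := by
    apply Finset.min'_le
    rw [Finset.mem_insert]
    right
    rw [Finset.mem_image]
    exact ⟨(p, q), Set.Finite.mem_toFinset _ |>.2 hmemS, rfl⟩
  have hlt : |ξ - (p:ℝ) / q| < Fd.min' hFdne := by
    calc |ξ - (p:ℝ) / q| ≤ 1 / (b:ℝ) ^ n * ((q:ℝ))⁻¹ := hdiv
    _ ≤ 1 / (b:ℝ) ^ n := by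
          rw [one_div]
          have h5 : ((q:ℝ))⁻¹ ≤ 1 := by
            rw [inv_le_one_iff₀]; right; exact_mod_cast hq1
          have h6 : (0:ℝ) < ((b:ℝ) ^ n)⁻¹ := by positivity
          nlinarith
    _ = ((b:ℝ)⁻¹) ^ n := by rw [one_div, inv_pow]
    _ ≤ ((b:ℝ)⁻¹) ^ N := pow_le_pow_of_le_one (by positivity)
          (inv_le_one_of_one_le₀ hb1.le) hnN
    _ < Fd.min' hFdne := hN
  linarith



lemma sol_mono (ξ : ℝ) {μ' μ : ℝ} (h : μ' ≤ μ) :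
    {pq : ℤ × ℕ | 1 ≤ pq.2 ∧ |ξ - pq.1 / pq.2| < (pq.2 : ℝ) ^ (-μ)} ⊆
    {pq : ℤ × ℕ | 1 ≤ pq.2 ∧ |ξ - pq.1 / pq.2| < (pq.2 : ℝ) ^ (-μ')} := by
  rintro pq ⟨h1, h2⟩
  refine ⟨h1, h2.trans_le (Real.rpow_le_rpow_of_exponent_le ?_ (by linarith))⟩
  exact_mod_cast h1

lemma freq_of_liminf {x : ℕ → ℕ} {c : ℝ} (hc : 1 ≤ c)
    (hlim : liminf (fun n : ℕ => (((minReturn x n : ℝ) / n : ℝ) : EReal)) atTop = (c : EReal))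
    {μ : ℝ} (hμ : 1 ≤ μ) (hcμ : (c - 1) * (μ - 1) < 1) :
    ∃ᶠ n in atTop, 0 < minReturn x n ∧ ((minReturn x n : ℝ) - n) * (μ - 1) < n := by
  have hμ0 : (0:ℝ) < μ := by linarith
  set ε := (1 - (c - 1) * (μ - 1)) / μ with hε
  have hεpos : 0 < ε := div_pos (by linarith) hμ0
  have hcoef : (c + ε - 1) * (μ - 1) < 1 := by
    have h2 : (c + ε - 1) * (μ - 1) = (c - 1) * (μ - 1) + ε * (μ - 1) := by ring
    rcases eq_or_lt_of_le hμ with hμe | hμs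
    · rw [h2, ← hμe]
      norm_num
    · have h1 : ε * (μ - 1) < (1 - (c - 1) * (μ - 1)) := by
        rw [hε, div_mul_eq_mul_div, div_lt_iff₀ hμ0]
        nlinarith
      linarith
  have h1 : ∃ᶠ n in atTop,
      (((minReturn x n : ℝ) / n : ℝ) : EReal) < ((c + ε : ℝ) : EReal) := by
    refine frequently_lt_of_liminf_lt ?_ ?_
    · isBoundedDefault
    · rw [hlim]
      exact_mod_cast (by linarith : c < c + ε)
  have h2 : ∀ᶠ n : ℕ in atTop,
      ((c - 1/2 : ℝ) : EReal) < (((minReturn x n : ℝ) / n : ℝ) : EReal) := by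
    refine eventually_lt_of_lt_liminf ?_ ?_
    · rw [hlim]
      exact_mod_cast (by linarith : c - 1/2 < c)
    · isBoundedDefault
  have h3 : ∀ᶠ n : ℕ in atTop, 1 ≤ n := eventually_ge_atTop 1
  refine (h1.and_eventually (h2.and h3)).mono ?_
  rintro n ⟨ha, hb', hn1⟩
  rw [EReal.coe_lt_coe_iff] at ha hb'
  have hn0 : (0:ℝ) < n := by exact_mod_cast hn1
  set m := minReturn x n with hm
  have hm0 : 0 < m := by
    by_contra h
    push_neg at h
    interval_cases m
    simp at hb'
    linarith
  refine ⟨hm0, ?_⟩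
  have hmlt : (m:ℝ) < (c + ε) * n := by
    rw [div_lt_iff₀ hn0] at ha
    linarith
  rcases eq_or_lt_of_le hμ with hμe | hμs
  · rw [← hμe]
    simpa using hn0
  · have hmn : (m:ℝ) - n < (c + ε - 1) * n := by linarith
    calc ((m:ℝ) - n) * (μ - 1) < ((c + ε - 1) * n) * (μ - 1) :=
          mul_lt_mul_of_pos_right hmn (by linarith)
    _ = ((c + ε - 1) * (μ - 1)) * n := by ring
    _ < 1 * n := mul_lt_mul_of_pos_right hcoef hn0
    _ = n := one_mul _



theorem stmt9 {b : ℕ} (hb : 2 ≤ b) (x : ℕ → ℕ) (hx : ∀ k, x k < b)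
    (hnp : ¬ UltimatelyPeriodic x) :
    (liminf (fun n : ℕ => (((minReturn x n : ℝ) / n : ℝ) : EReal)) atTop = 1 →
        irrationalityExponent (∑' k : ℕ, (x k : ℝ) / b ^ (k + 1)) = ⊤) ∧
      ∀ ρ : ℝ, 1 < ρ →
        liminf (fun n : ℕ => (((minReturn x n : ℝ) / n : ℝ) : EReal)) atTop = (ρ : EReal) →
        ((ρ / (ρ - 1) : ℝ) : EReal) ≤
          irrationalityExponent (∑' k : ℕ, (x k : ℝ) / b ^ (k + 1)) := by
  set ξ := ∑' k : ℕ, (x k : ℝ) / b ^ (k + 1) with hξ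
  constructor
  · intro hlim
    rw [show (1 : EReal) = ((1:ℝ) : EReal) by norm_num] at hlim
    have hall : ∀ μ : ℝ, (μ : EReal) ≤ irrationalityExponent ξ := by
      intro μ
      rcases le_or_gt 1 μ with hμ | hμ
      · have hfreq := freq_of_liminf le_rfl hlim hμ (by norm_num)
        have hinf := key_infinite hb hx hnp μ hμ hfreq
        exact le_sSup ⟨μ, rfl, hinf⟩
      · have hfreq := freq_of_liminf le_rfl hlim le_rfl (by norm_num)
        have hinf := key_infinite hb hx hnp 1 le_rfl hfreq
        exact le_sSup ⟨μ, rfl, hinf.mono (sol_mono ξ hμ.le)⟩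
    by_contra hne
    have hlt : irrationalityExponent ξ < ⊤ := lt_top_iff_ne_top.2 hne
    obtain ⟨r, hr1, _⟩ := EReal.lt_iff_exists_real_btwn.1 hlt
    exact absurd (hall r) (not_le.2 hr1)
  · intro ρ hρ hlim
    have hall : ∀ μ : ℝ, μ < ρ / (ρ - 1) → (μ : EReal) ≤ irrationalityExponent ξ := by
      intro μ hμlt
      rcases le_or_gt 1 μ with hμ | hμ
      · have hc : (ρ - 1) * (μ - 1) < 1 := by
          have hρ1 : (0:ℝ) < ρ - 1 := by linarith
          have := (lt_div_iff₀ hρ1).1 hμlt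
          nlinarith
        have hfreq := freq_of_liminf hρ.le hlim hμ hc
        have hinf := key_infinite hb hx hnp μ hμ hfreq
        exact le_sSup ⟨μ, rfl, hinf⟩
      · have hfreq := freq_of_liminf hρ.le hlim le_rfl (by norm_num)
        have hinf := key_infinite hb hx hnp 1 le_rfl hfreq
        exact le_sSup ⟨μ, rfl, hinf.mono (sol_mono ξ hμ.le)⟩
    by_contra hne
    push_neg at hne
    obtain ⟨r, hr1, hr2⟩ := EReal.lt_iff_exists_real_btwn.1 hne
    exact absurd (hall r (EReal.coe_lt_coe_iff.1 hr2)) (not_le.2 hr1)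
end

section
/- Let x be an infinite word over a finite alphabet, let b ≥ 2, and suppose 1 < C < 2 is such that there are arbitrarily large n with r(n, x) ≤ Cn, where x takes values in {0, ..., b−1}. If x is not ultimately periodic, then the irrationality exponent of ξ = Σ_{k≥1} x_k/b^k satisfies μ(ξ) ≥ 1 + 1/(C − 1). -/
open Filter

namespace S14

noncomputable def T (b : ℕ) (x : ℕ → ℕ) (n : ℕ) : ℝ :=
  ∑' k : ℕ, (x (n + k) : ℝ) / (b : ℝ) ^ (k + 1)

variable {b : ℕ} {x : ℕ → ℕ}

lemma hb1 (hb : 2 ≤ b) : (1 : ℝ) < (b : ℝ) := by exact_mod_cast hb.trans_lt' one_lt_two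

lemma summable_aux (hb : 2 ≤ b) (hx : ∀ k, x k < b) (n : ℕ) :
    Summable (fun k : ℕ => (x (n + k) : ℝ) / (b : ℝ) ^ (k + 1)) := by
  have h1 : (1:ℝ) < b := hb1 hb
  have h0 : (0:ℝ) < b := by linarith
  have hg : Summable (fun k : ℕ => (b : ℝ) * ((b:ℝ)⁻¹) ^ (k+1)) := by
    apply Summable.mul_left
    exact (summable_geometric_of_lt_one (by positivity) (by
      rw [inv_lt_one_iff₀]; right; exact h1)).comp_injective (add_left_injective 1)
  refine Summable.of_nonneg_of_le (fun k => by positivity) (fun k => ?_) hg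
  rw [div_eq_mul_inv, ← inv_pow]
  have hxb : (x (n+k) : ℝ) ≤ b := by exact_mod_cast (hx (n+k)).le
  exact mul_le_mul_of_nonneg_right hxb (by positivity)


lemma geom_sum_eq (hb : 2 ≤ b) :
    ∑' k : ℕ, ((b : ℝ) - 1) / (b : ℝ) ^ (k + 1) = 1 := by
  have h1 : (1:ℝ) < b := hb1 hb
  have h0 : (0:ℝ) < b := by linarith
  have hr : ((b:ℝ))⁻¹ < 1 := by rw [inv_lt_one_iff₀]; right; exact h1
  have hgeo : ∑' k : ℕ, ((b:ℝ)⁻¹) ^ k = (1 - (b:ℝ)⁻¹)⁻¹ :=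
    tsum_geometric_of_lt_one (by positivity) hr
  have : ∀ k : ℕ, ((b : ℝ) - 1) / (b : ℝ) ^ (k + 1)
      = (((b:ℝ) - 1) * (b:ℝ)⁻¹) * ((b:ℝ)⁻¹) ^ k := by
    intro k
    rw [pow_succ, div_eq_mul_inv, mul_inv, ← inv_pow]
    ring
  rw [tsum_congr this, tsum_mul_left, hgeo]
  have hne : (b:ℝ) - 1 ≠ 0 := by linarith
  field_simp

lemma summable_geom' (hb : 2 ≤ b) :
    Summable (fun k : ℕ => ((b : ℝ) - 1) / (b : ℝ) ^ (k + 1)) := by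
  have h1 : (1:ℝ) < b := hb1 hb
  have : ∀ k : ℕ, ((b : ℝ) - 1) / (b : ℝ) ^ (k + 1)
      = ((b:ℝ) - 1) * ((b:ℝ)⁻¹) ^ (k+1) := by
    intro k
    rw [div_eq_mul_inv, ← inv_pow]
  rw [show (fun k : ℕ => ((b : ℝ) - 1) / (b : ℝ) ^ (k + 1)) = fun k => ((b:ℝ) - 1) * ((b:ℝ)⁻¹) ^ (k+1) from funext this]
  apply Summable.mul_left
  exact (summable_geometric_of_lt_one (by positivity) (by
    rw [inv_lt_one_iff₀]; right; exact h1)).comp_injective (add_left_injective 1)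

lemma T_nonneg (n : ℕ) : 0 ≤ T b x n := tsum_nonneg (fun k => by positivity)

lemma T_le_one (hb : 2 ≤ b) (hx : ∀ k, x k < b) (n : ℕ) : T b x n ≤ 1 := by
  have := geom_sum_eq (b := b) hb
  rw [← this]
  refine Summable.tsum_le_tsum (fun k => ?_) (summable_aux hb hx n) ?_
  · apply div_le_div_of_nonneg_right ?_ (by positivity)
    · have : (x (n+k) : ℝ) + 1 ≤ b := by exact_mod_cast hx (n+k)
      linarith
  · exact summable_geom' hb

lemma T_split (hb : 2 ≤ b) (hx : ∀ k, x k < b) (n j : ℕ) :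
    T b x j = (∑ k ∈ Finset.range n, (x (j + k) : ℝ) / (b : ℝ) ^ (k + 1))
      + ((b : ℝ) ^ n)⁻¹ * T b x (j + n) := by
  have hs := summable_aux hb hx j
  have := (Summable.sum_add_tsum_nat_add (f := fun k : ℕ => (x (j + k) : ℝ) / (b : ℝ) ^ (k + 1)) n hs).symm
  rw [T, this]
  congr 1
  rw [T, ← tsum_mul_left]
  apply tsum_congr
  intro k
  have h0 : (0:ℝ) < b := by have := hb1 hb; linarith
  rw [show j + (k + n) = j + n + k by omega, show k + n + 1 = n + (k + 1) by omega, pow_add]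
  field_simp

lemma T_rec (hb : 2 ≤ b) (hx : ∀ k, x k < b) (n : ℕ) :
    (b : ℝ) * T b x n = (x n : ℝ) + T b x (n + 1) := by
  have h0 : (0:ℝ) < b := by have := hb1 hb; linarith
  have := T_split hb hx 1 n
  rw [Finset.sum_range_one] at this
  rw [this]
  field_simp
  simp only [add_zero, zero_add, pow_one]
  ring


lemma exists_not_max (hnp : ¬ UltimatelyPeriodic x) (hb : 2 ≤ b) (hx : ∀ k, x k < b) (n : ℕ) :
    ∃ j : ℕ, x (n + j) ≠ b - 1 := by
  by_contra h
  push_neg at h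
  refine hnp ⟨n, 1, one_pos, fun k hk => ?_⟩
  have h1 := h (k + 1 - n)
  have h2 := h (k - n)
  rw [show n + (k + 1 - n) = k + 1 by omega] at h1
  rw [show n + (k - n) = k by omega] at h2
  omega

lemma T_lt_one (hnp : ¬ UltimatelyPeriodic x) (hb : 2 ≤ b) (hx : ∀ k, x k < b) (n : ℕ) :
    T b x n < 1 := by
  obtain ⟨j, hj⟩ := exists_not_max hnp hb hx n
  rw [← geom_sum_eq (b := b) hb]
  refine Summable.tsum_lt_tsum (i := j) (fun k => ?_) ?_ (summable_aux hb hx n) (summable_geom' hb)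
  · apply div_le_div_of_nonneg_right ?_ (by positivity)
    have : (x (n+k) : ℝ) + 1 ≤ b := by exact_mod_cast hx (n+k)
    linarith
  · apply div_lt_div_of_pos_right ?_ (by positivity)
    have h2 : x (n+j) + 1 < b := by have := hx (n+j); omega
    have : (x (n+j) : ℝ) + 1 < b := by exact_mod_cast h2
    linarith

lemma exists_int (hb : 2 ≤ b) (hx : ∀ k, x k < b) (s i : ℕ) :
    ∃ M : ℤ, (b : ℝ) ^ s * T b x i = (M : ℝ) + T b x (i + s) := by
  induction s with
  | zero => exact ⟨0, by simp⟩
  | succ s ih =>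
    obtain ⟨M, hM⟩ := ih
    refine ⟨b * M + x (i + s), ?_⟩
    rw [pow_succ, mul_comm ((b:ℝ)^s), mul_assoc, hM, mul_add, T_rec hb hx (i+s)]
    push_cast
    ring_nf

lemma shift_of_T_eq (hnp : ¬ UltimatelyPeriodic x) (hb : 2 ≤ b) (hx : ∀ k, x k < b)
    {n m : ℕ} (h : T b x n = T b x m) : ∀ k, x (n + k) = x (m + k) := by
  have key : ∀ n m : ℕ, T b x n = T b x m → x n = x m ∧ T b x (n+1) = T b x (m+1) := by
    intro n m h
    have h1 := T_rec hb hx n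
    have h2 := T_rec hb hx m
    rw [h] at h1
    have heq : (x n : ℝ) + T b x (n+1) = (x m : ℝ) + T b x (m+1) := by linarith
    have hxnm : x n = x m := by
      have b1 := T_nonneg (b := b) (x := x) (n+1)
      have b2 := T_lt_one hnp hb hx (n+1)
      have b3 := T_nonneg (b := b) (x := x) (m+1)
      have b4 := T_lt_one hnp hb hx (m+1)
      have : ((x n : ℤ) : ℝ) - (x m : ℤ) = T b x (m+1) - T b x (n+1) := by push_cast; linarith
      have habs : |((x n : ℤ) : ℝ) - (x m : ℤ)| < 1 := by rw [this]; rw [abs_lt]; constructor <;> linarith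
      have : (x n : ℤ) = x m := by
        have := abs_lt.mp habs
        have h5 : ((x n : ℤ) - x m : ℤ) < 1 ∧ (-1 : ℤ) < (x n : ℤ) - x m := by
          constructor <;> [exact_mod_cast (by push_cast at this ⊢; linarith : ((x n : ℤ) - x m : ℝ) < 1);
            exact_mod_cast (by push_cast at this ⊢; linarith : (-1:ℝ) < ((x n : ℤ) - x m : ℝ))]
        omega
      exact_mod_cast this
    refine ⟨hxnm, ?_⟩
    have : (x n : ℝ) = x m := by exact_mod_cast hxnm
    linarith
  intro k
  induction k with
  | zero =>
    simpa using (key n m h).1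
  | succ k ih =>
    have hk : T b x (n + k) = T b x (m + k) := by
      clear ih
      induction k with
      | zero => simpa using h
      | succ k ih2 =>
        have := (key (n + k) (m + k) ih2).2
        rw [show n + k + 1 = n + (k + 1) by omega, show m + k + 1 = m + (k + 1) by omega] at this
        exact this
    have := (key (n + (k+1)) (m + (k+1)) ?_).1
    · exact this
    · have := (key (n + k) (m + k) hk).2
      rw [show n + k + 1 = n + (k + 1) by omega, show m + k + 1 = m + (k + 1) by omega] at this
      exact this


lemma irrational_T (hnp : ¬ UltimatelyPeriodic x) (hb : 2 ≤ b) (hx : ∀ k, x k < b) :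
    ∀ (p : ℤ) (q : ℕ), 0 < q → T b x 0 ≠ (p : ℝ) / (q : ℝ) := by
  intro p q hq hξ
  have hq0 : (0:ℝ) < q := by exact_mod_cast hq
  choose A hA using fun n => exists_int (x := x) hb hx n 0
  set B : ℕ → ℤ := fun n => (b:ℤ)^n * p - q * A n with hB
  have hBT : ∀ n, (B n : ℝ) = q * T b x n := by
    intro n
    have h := hA n
    rw [zero_add, hξ] at h
    push_cast [hB]
    field_simp at h ⊢
    linarith
  have hBlt : ∀ n, 0 ≤ B n ∧ B n < q := by
    intro n
    have h1 := T_nonneg (b := b) (x := x) n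
    have h2 := T_lt_one hnp hb hx n
    constructor
    · have : (0:ℝ) ≤ (B n : ℝ) := by rw [hBT]; positivity
      exact_mod_cast this
    · have : (B n : ℝ) < q := by rw [hBT]; nlinarith
      exact_mod_cast this
  have : ∃ n m : ℕ, n ≠ m ∧ (fun n => (⟨(B n).toNat, by have := hBlt n; omega⟩ : Fin q)) n
      = (fun n => (⟨(B n).toNat, by have := hBlt n; omega⟩ : Fin q)) m :=
    Finite.exists_ne_map_eq_of_infinite _
  obtain ⟨n, m, hnm, hfe⟩ := this
  have hBeq : B n = B m := by
    have := Fin.mk.injEq .. ▸ hfe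
    have h2 : (B n).toNat = (B m).toNat := by simpa using hfe
    have := (hBlt n).1; have := (hBlt m).1
    omega
  have hTeq : T b x n = T b x m := by
    have := hBT n
    rw [hBeq, hBT m] at this
    have := mul_left_cancel₀ (ne_of_gt hq0) this
    linarith [this]
  have hshift := shift_of_T_eq hnp hb hx hTeq
  rcases Nat.lt_or_ge n m with hlt | hge
  · refine hnp ⟨n, m - n, by omega, fun k hk => ?_⟩
    have := (hshift (k - n)).symm
    rw [show n + (k - n) = k by omega] at this
    rw [show k + (m - n) = m + (k - n) by omega]
    exact this
  · have hlt : m < n := by omega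
    refine hnp ⟨m, n - m, by omega, fun k hk => ?_⟩
    have := hshift (k - m)
    rw [show m + (k - m) = k by omega] at this
    rw [show k + (n - m) = n + (k - m) by omega]
    exact this

lemma returnSet_nonempty (hb : 2 ≤ b) (hx : ∀ k, x k < b) (n : ℕ) :
    (returnSet x n).Nonempty := by
  have hbpos : 0 < b := by omega
  have hcard : Fintype.card (Fin n → Fin b) < Fintype.card (Fin (b ^ n + 1)) := by
    simp [Fintype.card_fun]
  obtain ⟨i, j, hij, hfe⟩ := Fintype.exists_ne_map_eq_of_card_lt
    (fun (i : Fin (b ^ n + 1)) (k : Fin n) => (⟨x (i + k), hx _⟩ : Fin b)) hcard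
  rcases Nat.lt_or_ge (i : ℕ) (j : ℕ) with hlt | hge
  · refine ⟨(j : ℕ) + n, (i : ℕ), by omega, fun k hk => ?_⟩
    have := congrFun hfe ⟨k, hk⟩
    simp only [Fin.mk.injEq] at this
    rw [show (j : ℕ) + n - n = (j : ℕ) by omega]
    exact this
  · have hlt : (j : ℕ) < (i : ℕ) := by
      rcases Nat.lt_or_ge (j : ℕ) (i : ℕ) with h | h
      · exact h
      · exact absurd (Fin.ext (by omega)) hij
    refine ⟨(i : ℕ) + n, (j : ℕ), by omega, fun k hk => ?_⟩
    have := congrFun hfe ⟨k, hk⟩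
    simp only [Fin.mk.injEq] at this
    rw [show (i : ℕ) + n - n = (i : ℕ) by omega]
    exact this.symm


lemma approx (hnp : ¬ UltimatelyPeriodic x) (hb : 2 ≤ b) (hx : ∀ k, x k < b)
    {n m : ℕ} (hm : m ∈ returnSet x n) :
    ∃ (p : ℤ) (q : ℕ), 1 ≤ q ∧ (q : ℝ) < (b : ℝ) ^ (m - n) ∧
      |T b x 0 - (p : ℝ) / (q : ℝ)| ≤ ((b : ℝ) ^ n)⁻¹ / (q : ℝ) ∧
      0 < |T b x 0 - (p : ℝ) / (q : ℝ)| := by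
  obtain ⟨i, him, hper⟩ := hm
  have hbR : (1:ℝ) < b := hb1 hb
  set s := m - n - i with hs_def
  have hs : 0 < s := by omega
  have hmn : m - n = i + s := by omega
  obtain ⟨A, hA⟩ := exists_int (x := x) hb hx i 0
  obtain ⟨M, hM⟩ := exists_int (x := x) hb hx s i
  rw [zero_add] at hA
  have hbs1 : 1 ≤ b ^ s - 1 := by
    have : 2 ≤ b ^ s := le_trans hb (Nat.le_self_pow (by omega) b)
    omega
  have hq : ((b ^ i * (b ^ s - 1) : ℕ) : ℝ) = (b:ℝ)^i * ((b:ℝ)^s - 1) := by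
    have h2 : 1 ≤ b ^ s := Nat.one_le_pow _ _ (by omega)
    push_cast [Nat.cast_sub h2]
    ring
  have hbsR : (1:ℝ) < (b:ℝ)^s := one_lt_pow₀ hbR (by omega)
  have hqpos : (0:ℝ) < ((b ^ i * (b ^ s - 1) : ℕ) : ℝ) := by
    rw [hq]
    have : (0:ℝ) < (b:ℝ)^i := by positivity
    nlinarith
  refine ⟨A * ((b:ℤ)^s - 1) + M, b ^ i * (b ^ s - 1), ?_, ?_, ?_, ?_⟩
  · exact Nat.mul_pos (pow_pos (by omega) i) (by omega)
  · -- q < b ^ (m - n)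
    rw [hq, hmn, pow_add]
    have hbi : (0:ℝ) < (b:ℝ)^i := by positivity
    nlinarith
  · -- key identity and bound
    have key : T b x 0 - ((A * ((b:ℤ)^s - 1) + M : ℤ) : ℝ) / ((b ^ i * (b ^ s - 1) : ℕ) : ℝ)
        = (T b x (i + s) - T b x i) / ((b ^ i * (b ^ s - 1) : ℕ) : ℝ) := by
      rw [eq_div_iff (ne_of_gt hqpos), sub_mul, div_mul_cancel₀ _ (ne_of_gt hqpos), hq]
      push_cast
      nlinarith [hA, hM]
    rw [key, abs_div, abs_of_pos hqpos]
    apply div_le_div_of_nonneg_right ?_ hqpos.le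
    -- |T (i+s) - T i| ≤ (b^n)⁻¹
    have h1 := T_split hb hx n i
    have h2 := T_split hb hx n (i + s)
    have hsum : (∑ k ∈ Finset.range n, (x (i + k) : ℝ) / (b : ℝ) ^ (k + 1))
        = ∑ k ∈ Finset.range n, (x (i + s + k) : ℝ) / (b : ℝ) ^ (k + 1) := by
      apply Finset.sum_congr rfl
      intro k hk
      rw [hper k (Finset.mem_range.mp hk), hmn]
    have : T b x (i + s) - T b x i
        = ((b:ℝ)^n)⁻¹ * (T b x (i + s + n) - T b x (i + n)) := by
      rw [h1, h2, hsum]; ring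
    rw [this, abs_mul, abs_of_pos (by positivity : (0:ℝ) < ((b:ℝ)^n)⁻¹)]
    have hband : |T b x (i + s + n) - T b x (i + n)| ≤ 1 := by
      rw [abs_le]
      constructor
      · have := T_le_one hb hx (i + n); have := T_nonneg (b := b) (x := x) (i + s + n); linarith
      · have := T_le_one hb hx (i + s + n); have := T_nonneg (b := b) (x := x) (i + n); linarith
    calc ((b:ℝ)^n)⁻¹ * |T b x (i + s + n) - T b x (i + n)| ≤ ((b:ℝ)^n)⁻¹ * 1 :=
          mul_le_mul_of_nonneg_left hband (by positivity)
      _ = ((b:ℝ)^n)⁻¹ := mul_one _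
  · -- positivity
    rw [abs_pos, sub_ne_zero]
    exact irrational_T hnp hb hx _ _ (Nat.mul_pos (pow_pos (by omega) i) (by omega))

end S14

open S14 in
theorem stmt14 {b : ℕ} (hb : 2 ≤ b) (x : ℕ → ℕ) (hx : ∀ k, x k < b)
    (hnp : ¬ UltimatelyPeriodic x) (C : ℝ) (hC1 : 1 < C) (hC2 : C < 2)
    (hoften : ∀ N : ℕ, ∃ n : ℕ, N ≤ n ∧ (minReturn x n : ℝ) ≤ C * n) :
    ((1 + 1 / (C - 1) : ℝ) : EReal) ≤
      irrationalityExponent (∑' k : ℕ, (x k : ℝ) / b ^ (k + 1)) := by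
  have hbR : (1:ℝ) < b := S14.hb1 hb
  set ξ := ∑' k : ℕ, (x k : ℝ) / b ^ (k + 1) with hxi
  have hξT : ξ = S14.T b x 0 := by
    rw [hxi, S14.T]
    exact tsum_congr (fun k => by rw [zero_add])
  set μ := 1 + 1/(C-1) with hμ
  have hC1' : (0:ℝ) < C - 1 := by linarith
  have hμ1 : 0 < μ - 1 := by
    rw [hμ]
    have : 0 < 1/(C-1) := by positivity
    linarith
  have hμsub : μ - 1 = 1/(C-1) := by rw [hμ]; ring
  have claim : ∀ N : ℕ, ∃ pq : ℤ × ℕ,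
      (1 ≤ pq.2 ∧ |ξ - (pq.1 : ℝ) / (pq.2 : ℝ)| < (pq.2 : ℝ) ^ (-μ)) ∧
      |ξ - (pq.1 : ℝ) / (pq.2 : ℝ)| ≤ ((b:ℝ)^N)⁻¹ := by
    intro N
    obtain ⟨n, hnN, hmin⟩ := hoften (N + 1)
    have hmem : minReturn x n ∈ returnSet x n := Nat.sInf_mem (S14.returnSet_nonempty hb hx n)
    set m := minReturn x n with hm
    obtain ⟨p, q, hq1, hqlt, hbound, hpos⟩ := S14.approx hnp hb hx hmem
    have hnm : n < m := by obtain ⟨i, hi, _⟩ := hmem; omega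
    have hqR : (1:ℝ) ≤ (q:ℝ) := by exact_mod_cast hq1
    have hqpos : (0:ℝ) < q := by linarith
    have h2 : (q:ℝ) < (b:ℝ) ^ (((C-1) * n : ℝ)) := by
      apply hqlt.trans_le
      rw [← Real.rpow_natCast (b:ℝ) (m - n)]
      apply Real.rpow_le_rpow_of_exponent_le hbR.le
      have hcast : ((m - n : ℕ) : ℝ) = (m:ℝ) - n := by
        rw [Nat.cast_sub hnm.le]
      rw [hcast]
      have hmC : (m:ℝ) ≤ C * n := hmin
      linarith
    have h3 : (q:ℝ) ^ (μ - 1) < (b:ℝ) ^ n := by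
      calc (q:ℝ)^(μ-1) < ((b:ℝ) ^ (((C-1) * n : ℝ)))^(μ-1) :=
            Real.rpow_lt_rpow (by positivity) h2 hμ1
        _ = (b:ℝ)^((((C-1) * n) * (μ-1) : ℝ)) := by
            rw [← Real.rpow_mul (by positivity)]
        _ = (b:ℝ)^((n:ℝ)) := by
            congr 1
            rw [hμsub]
            field_simp
        _ = (b:ℝ)^n := Real.rpow_natCast _ n
    have hkey : ((b:ℝ)^n)⁻¹ / q < (q:ℝ)^(-μ) := by
      have hql : (q:ℝ)^μ < (b:ℝ)^n * q := by
        have : (q:ℝ)^μ = q * (q:ℝ)^(μ-1) := by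
          rw [show (q:ℝ) * (q:ℝ)^(μ-1) = (q:ℝ)^(1:ℝ) * (q:ℝ)^(μ-1) by rw [Real.rpow_one],
            ← Real.rpow_add hqpos]
          norm_num
        rw [this]
        calc (q:ℝ) * (q:ℝ)^(μ-1) < q * (b:ℝ)^n := by
              exact mul_lt_mul_of_pos_left h3 hqpos
          _ = (b:ℝ)^n * q := mul_comm _ _
      rw [Real.rpow_neg hqpos.le]
      rw [div_eq_mul_inv, ← mul_inv]
      exact inv_strictAnti₀ (Real.rpow_pos_of_pos hqpos μ) hql
    refine ⟨(p, q), ⟨hq1, ?_⟩, ?_⟩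
    · simp only
      rw [hξT]
      exact lt_of_le_of_lt hbound hkey
    · simp only
      rw [hξT]
      apply hbound.trans
      have h5 : ((b:ℝ)^n)⁻¹ / q ≤ ((b:ℝ)^n)⁻¹ := by
        rw [div_le_iff₀ hqpos]
        nlinarith [inv_pos.mpr (pow_pos (by linarith : (0:ℝ) < b) n)]
      apply h5.trans
      apply inv_anti₀ (by positivity)
      exact pow_le_pow_right₀ hbR.le (by omega)
  have hinf : {pq : ℤ × ℕ | 1 ≤ pq.2 ∧
      |ξ - (pq.1 : ℝ) / (pq.2 : ℝ)| < (pq.2 : ℝ) ^ (-μ)}.Infinite := by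
    by_contra hfin
    rw [Set.not_infinite] at hfin
    obtain ⟨pq0, hpq0, _⟩ := claim 0
    have hne : hfin.toFinset.Nonempty := ⟨pq0, hfin.mem_toFinset.mpr hpq0⟩
    have hDne : (hfin.toFinset.image (fun pq : ℤ × ℕ => |ξ - (pq.1 : ℝ) / (pq.2 : ℝ)|)).Nonempty :=
      hne.image _
    set D := hfin.toFinset.image (fun pq : ℤ × ℕ => |ξ - (pq.1 : ℝ) / (pq.2 : ℝ)|) with hD
    obtain ⟨pq1, hpq1, hδ⟩ := Finset.mem_image.mp (D.min'_mem hDne)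
    set δ := D.min' hDne with hδdef
    have hδpos : 0 < δ := by
      rw [← hδ, abs_pos, sub_ne_zero, hξT]
      exact S14.irrational_T hnp hb hx _ _ ((hfin.mem_toFinset.mp hpq1).1)
    obtain ⟨N, hN⟩ := pow_unbounded_of_one_lt (δ⁻¹) hbR
    obtain ⟨pq, hpqS, hdist⟩ := claim N
    have hge : δ ≤ |ξ - (pq.1 : ℝ) / (pq.2 : ℝ)| :=
      D.min'_le _ (Finset.mem_image_of_mem _ (hfin.mem_toFinset.mpr hpqS))
    have hlt : ((b:ℝ)^N)⁻¹ < δ := by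
      have h := inv_strictAnti₀ (inv_pos.mpr hδpos) hN
      rwa [inv_inv] at h
    linarith
  exact le_sSup ⟨μ, by rw [hμ], hinf⟩
end

section
/- Let b ≥ 2 and suppose the infinite word x over {0, ..., b−1} has a prefix of the form W (UV)^{t+1} U, where W, U, V are finite words, t ≥ 1 is an integer, and UV is nonempty. Then there exists an integer p such that |ξ − p/(b^{|W|}(b^{|UV|} − 1))| ≤ b^{−|W (UV)^{t+1} U|}, where ξ = Σ_{k≥1} x_k/b^k. -/
private lemma flatten_rep_len {α : Type*} (n : ℕ) (l : List α) :
    (List.replicate n l).flatten.length = n * l.length := by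
  induction n with
  | zero => simp
  | succ k ih =>
      rw [List.replicate_succ]
      simp only [List.flatten_cons, List.length_append, ih]
      ring

private lemma per_aux (U V : List ℕ) (t : ℕ) (hm : 0 < (U ++ V).length) :
    ∀ j, j < ((List.replicate (t + 1) (U ++ V)).flatten ++ U).length →
      ((List.replicate (t + 1) (U ++ V)).flatten ++ U).getD j 0 =
      ((List.replicate (t + 1) (U ++ V)).flatten ++ U).getD (j % (U ++ V).length) 0 := by
  set m := (U ++ V).length with hmdef
  set tail := (List.replicate t (U ++ V)).flatten ++ U with htail
  have h1 : (List.replicate (t + 1) (U ++ V)).flatten ++ U = (U ++ V) ++ tail := by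
    rw [List.replicate_succ, List.flatten_cons, List.append_assoc]
  have h2 : (List.replicate (t + 1) (U ++ V)).flatten ++ U = tail ++ (V ++ U) := by
    rw [List.replicate_succ', List.flatten_append, htail]
    simp [List.append_assoc]
  have hlen : ((List.replicate (t + 1) (U ++ V)).flatten ++ U).length
      = (t + 1) * m + U.length := by
    simp [flatten_rep_len, hmdef]
  have htlen : tail.length = t * m + U.length := by
    simp [htail, flatten_rep_len, hmdef]
  have hmul : (t + 1) * m = t * m + m := by ring
  intro j
  induction j using Nat.strong_induction_on with
  | _ j ih =>
    intro hj
    rcases lt_or_ge j m with h | h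
    · rw [Nat.mod_eq_of_lt h]
    · rw [hlen] at hj
      have hjm : j - m < tail.length := by rw [htlen]; omega
      have e1 : ((List.replicate (t + 1) (U ++ V)).flatten ++ U).getD j 0
          = tail.getD (j - m) 0 := by
        rw [h1]
        have := List.getD_append_right (U ++ V) tail 0 j (by rw [← hmdef]; exact h)
        rw [this]
      have e2 : ((List.replicate (t + 1) (U ++ V)).flatten ++ U).getD (j - m) 0
          = tail.getD (j - m) 0 := by
        rw [h2]; exact List.getD_append _ _ _ _ hjm
      rw [Nat.mod_eq_sub_mod h, e1, ← e2]
      exact ih (j - m) (by omega) (by rw [hlen]; omega)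

private lemma digit_summable {b : ℕ} (hb : 2 ≤ b) (z : ℕ → ℕ) (hz : ∀ k, z k < b) :
    Summable (fun k => (z k : ℝ) / (b : ℝ) ^ (k + 1)) := by
  have hb1 : (1 : ℝ) < (b : ℝ) := by exact_mod_cast lt_of_lt_of_le one_lt_two hb
  have hb0 : (0 : ℝ) < (b : ℝ) := lt_trans one_pos hb1
  apply Summable.of_nonneg_of_le (fun k => by positivity) (fun k => ?_)
    (summable_geometric_of_lt_one (by positivity) (inv_lt_one_of_one_lt₀ hb1))
  have hzk : (z k : ℝ) ≤ (b : ℝ) := le_of_lt (by exact_mod_cast hz k)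
  rw [inv_pow, ← one_div, div_le_div_iff₀ (by positivity) (by positivity), one_mul]
  calc (z k : ℝ) * (b : ℝ) ^ k ≤ (b : ℝ) * (b : ℝ) ^ k :=
        mul_le_mul_of_nonneg_right hzk (by positivity)
    _ = (b : ℝ) ^ (k + 1) := by rw [pow_succ]; ring

/-- A repetitive prefix `W (UV)^{t+1} U` of the base-`b` digit sequence of `ξ`
yields a good rational approximation with denominator `b^{|W|} (b^{|UV|} - 1)`. -/
theorem stmt17 {b : ℕ} (hb : 2 ≤ b) (x : ℕ → ℕ) (hx : ∀ k, x k < b)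
    (W U V : List ℕ) (t : ℕ) (ht : 1 ≤ t) (hUV : U ++ V ≠ [])
    (hpre : ∀ (k : ℕ) (hk : k < (W ++ (List.replicate (t + 1) (U ++ V)).flatten ++ U).length),
      x k = (W ++ (List.replicate (t + 1) (U ++ V)).flatten ++ U).get ⟨k, hk⟩) :
    ∃ p : ℤ,
      |(∑' k : ℕ, (x k : ℝ) / b ^ (k + 1)) -
          p / ((b : ℝ) ^ W.length * ((b : ℝ) ^ (U ++ V).length - 1))| ≤
        ((b : ℝ) ^ (W ++ (List.replicate (t + 1) (U ++ V)).flatten ++ U).length)⁻¹ := by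
  have hb1 : (1 : ℝ) < (b : ℝ) := by exact_mod_cast lt_of_lt_of_le one_lt_two hb
  have hb0 : (0 : ℝ) < (b : ℝ) := lt_trans one_pos hb1
  set Q := (List.replicate (t + 1) (U ++ V)).flatten ++ U with hQdef
  set w := W.length with hwdef
  set m := (U ++ V).length with hmdef
  set L := (W ++ (List.replicate (t + 1) (U ++ V)).flatten ++ U).length with hLdef
  have hassoc : W ++ (List.replicate (t + 1) (U ++ V)).flatten ++ U = W ++ Q := by
    rw [hQdef]; exact List.append_assoc W _ U
  have hm : 0 < m := List.length_pos_iff.mpr hUV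
  have hQlen : Q.length = (t + 1) * m + U.length := by
    simp [hQdef, flatten_rep_len, hmdef]
  have hLeq : L = w + Q.length := by
    rw [hLdef, hassoc, List.length_append, hwdef]
  have hmul : (t + 1) * m = t * m + m := by ring
  have hmQ : m ≤ Q.length := by rw [hQlen]; omega
  -- digits from the list
  have hxQ : ∀ k, w ≤ k → k < L → x k = Q.getD (k - w) 0 := by
    intro k hkw hkL
    have hkL' : k < (W ++ (List.replicate (t + 1) (U ++ V)).flatten ++ U).length := by
      rw [hLdef] at hkL; exact hkL
    have h1 : x k = (W ++ (List.replicate (t + 1) (U ++ V)).flatten ++ U).getD k 0 := by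
      rw [hpre k hkL', List.get_eq_getElem, List.getD_eq_getElem _ 0 hkL']
    rw [h1, hassoc, hwdef]
    rw [hwdef] at hkw
    exact List.getD_append_right W Q 0 k hkw
  -- periodicity of digits
  have key : ∀ k, w ≤ k → k < L → x k = x (w + (k - w) % m) := by
    intro k hkw hkL
    have hkQ : k - w < Q.length := by omega
    have hmod : (k - w) % m < m := Nat.mod_lt _ hm
    have h2L : w + (k - w) % m < L := by omega
    rw [hxQ k hkw hkL, hxQ (w + (k - w) % m) (Nat.le_add_right _ _) h2L,
      Nat.add_sub_cancel_left]
    exact per_aux U V t hm (k - w) hkQ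
  -- the periodic digit sequence
  set d : ℕ → ℕ := fun i => x (w + i) with hddef
  set y : ℕ → ℕ := fun k => if k < w then x k else d ((k - w) % m) with hydef
  have hy_lt : ∀ k, y k < b := by
    intro k; rw [hydef]; dsimp only; split <;> exact hx _
  have hxy : ∀ k, k < L → x k = y k := by
    intro k hkL
    rw [hydef]; dsimp only
    split
    · rfl
    · rename_i h
      rw [hddef]; dsimp only
      exact key k (le_of_not_gt h) hkL
  -- summability
  have hf : Summable (fun k => (x k : ℝ) / (b : ℝ) ^ (k + 1)) := digit_summable hb x hx
  have hg : Summable (fun k => (y k : ℝ) / (b : ℝ) ^ (k + 1)) := digit_summable hb y hy_lt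
  have hD : Summable (fun k => (d (k % m) : ℝ) / (b : ℝ) ^ (k + 1)) :=
    digit_summable hb _ (fun k => hx _)
  -- value of the periodic tail
  set S : ℝ := ∑ i ∈ Finset.range m, (d i : ℝ) / (b : ℝ) ^ (i + 1) with hSdef
  have hbm1 : (1 : ℝ) < (b : ℝ) ^ m := one_lt_pow₀ hb1 hm.ne'
  have hbm0 : (0 : ℝ) < (b : ℝ) ^ m := lt_trans one_pos hbm1
  have hDval : ∑' k, (d (k % m) : ℝ) / (b : ℝ) ^ (k + 1) = S / (1 - ((b : ℝ) ^ m)⁻¹) := by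
    have hsplit := Summable.sum_add_tsum_nat_add m hD
    have hhead : ∑ i ∈ Finset.range m, (d (i % m) : ℝ) / (b : ℝ) ^ (i + 1) = S := by
      rw [hSdef]
      refine Finset.sum_congr rfl (fun i hi => ?_)
      rw [Nat.mod_eq_of_lt (Finset.mem_range.mp hi)]
    have htail : ∀ i : ℕ, (d ((i + m) % m) : ℝ) / (b : ℝ) ^ (i + m + 1)
        = ((b : ℝ) ^ m)⁻¹ * ((d (i % m) : ℝ) / (b : ℝ) ^ (i + 1)) := by
      intro i
      rw [Nat.add_mod_right]
      have : (b : ℝ) ^ (i + m + 1) = (b : ℝ) ^ m * (b : ℝ) ^ (i + 1) := by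
        rw [← pow_add]; congr 1; omega
      rw [this]
      field_simp
    rw [hhead] at hsplit
    simp_rw [htail] at hsplit
    rw [tsum_mul_left] at hsplit
    have h1m : 1 - ((b : ℝ) ^ m)⁻¹ ≠ 0 := by
      have : ((b : ℝ) ^ m)⁻¹ < 1 := inv_lt_one_of_one_lt₀ hbm1
      linarith
    rw [eq_div_iff h1m]
    linear_combination -hsplit
  -- value of the whole periodic sum
  have hgval : ∑' k, (y k : ℝ) / (b : ℝ) ^ (k + 1)
      = (∑ k ∈ Finset.range w, (x k : ℝ) / (b : ℝ) ^ (k + 1))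
        + ((b : ℝ) ^ w)⁻¹ * (S / (1 - ((b : ℝ) ^ m)⁻¹)) := by
    have hsplit := Summable.sum_add_tsum_nat_add w hg
    have hhead : ∑ k ∈ Finset.range w, (y k : ℝ) / (b : ℝ) ^ (k + 1)
        = ∑ k ∈ Finset.range w, (x k : ℝ) / (b : ℝ) ^ (k + 1) := by
      refine Finset.sum_congr rfl (fun k hk => ?_)
      rw [hydef]; dsimp only
      rw [if_pos (Finset.mem_range.mp hk)]
    have htail : ∀ k : ℕ, (y (k + w) : ℝ) / (b : ℝ) ^ (k + w + 1)
        = ((b : ℝ) ^ w)⁻¹ * ((d (k % m) : ℝ) / (b : ℝ) ^ (k + 1)) := by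
      intro k
      rw [hydef]; dsimp only
      rw [if_neg (by omega), Nat.add_sub_cancel]
      have : (b : ℝ) ^ (k + w + 1) = (b : ℝ) ^ w * (b : ℝ) ^ (k + 1) := by
        rw [← pow_add]; congr 1; omega
      rw [this]
      field_simp
    rw [hhead] at hsplit
    simp_rw [htail] at hsplit
    rw [tsum_mul_left, hDval] at hsplit
    linarith [hsplit]
  -- the integer p
  set A : ℤ := ∑ k ∈ Finset.range w, (x k : ℤ) * (b : ℤ) ^ (w - 1 - k) with hAdef
  set C : ℤ := ∑ i ∈ Finset.range m, (d i : ℤ) * (b : ℤ) ^ (m - 1 - i) with hCdef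
  refine ⟨A * ((b : ℤ) ^ m - 1) + C, ?_⟩
  have hA : ∑ k ∈ Finset.range w, (x k : ℝ) / (b : ℝ) ^ (k + 1) = (A : ℝ) / (b : ℝ) ^ w := by
    rw [hAdef]
    push_cast
    rw [Finset.sum_div]
    refine Finset.sum_congr rfl (fun k hk => ?_)
    have hkw := Finset.mem_range.mp hk
    have hpow : (b : ℝ) ^ (w - 1 - k) * (b : ℝ) ^ (k + 1) = (b : ℝ) ^ w := by
      rw [← pow_add]; congr 1; omega
    rw [div_eq_div_iff (by positivity) (by positivity), mul_assoc, hpow]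
  have hC : S = (C : ℝ) / (b : ℝ) ^ m := by
    rw [hSdef, hCdef]
    push_cast
    rw [Finset.sum_div]
    refine Finset.sum_congr rfl (fun i hi => ?_)
    have him := Finset.mem_range.mp hi
    have hpow : (b : ℝ) ^ (m - 1 - i) * (b : ℝ) ^ (i + 1) = (b : ℝ) ^ m := by
      rw [← pow_add]; congr 1; omega
    rw [div_eq_div_iff (by positivity) (by positivity), mul_assoc, hpow]
  have hbw0 : (0 : ℝ) < (b : ℝ) ^ w := by positivity
  have hgrat : ∑' k, (y k : ℝ) / (b : ℝ) ^ (k + 1)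
      = ((A * ((b : ℤ) ^ m - 1) + C : ℤ) : ℝ) / ((b : ℝ) ^ w * ((b : ℝ) ^ m - 1)) := by
    rw [hgval, hA, hC]
    push_cast
    have hne : (b : ℝ) ^ m - 1 ≠ 0 := by linarith
    field_simp
  rw [← hgrat]
  have h1m : (1 : ℝ) - (b : ℝ)⁻¹ ≠ 0 := by
    have : (b : ℝ)⁻¹ < 1 := inv_lt_one_of_one_lt₀ hb1
    linarith
  -- difference of the two series
  have hsubsum : Summable (fun k => (x k : ℝ) / (b : ℝ) ^ (k + 1)
      - (y k : ℝ) / (b : ℝ) ^ (k + 1)) := hf.sub hg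
  have hfg : (∑' k : ℕ, (x k : ℝ) / (b : ℝ) ^ (k + 1))
      - (∑' k : ℕ, (y k : ℝ) / (b : ℝ) ^ (k + 1))
      = ∑' k : ℕ, ((x (k + L) : ℝ) - (y (k + L) : ℝ)) / (b : ℝ) ^ (k + L + 1) := by
    rw [← Summable.tsum_sub hf hg, ← Summable.sum_add_tsum_nat_add L hsubsum]
    have hzero : ∑ k ∈ Finset.range L, ((x k : ℝ) / (b : ℝ) ^ (k + 1)
        - (y k : ℝ) / (b : ℝ) ^ (k + 1)) = 0 := by
      apply Finset.sum_eq_zero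
      intro k hk
      rw [hxy k (Finset.mem_range.mp hk)]
      ring
    rw [hzero, zero_add]
    exact tsum_congr fun k => by rw [div_sub_div_same]
  rw [hfg]
  -- the bounding geometric series
  have hBsum : Summable (fun k : ℕ => ((b : ℝ) - 1) * ((b : ℝ)⁻¹) ^ (L + 1) * ((b : ℝ)⁻¹) ^ k) :=
    (summable_geometric_of_lt_one (by positivity) (inv_lt_one_of_one_lt₀ hb1)).mul_left _
  have habs : Summable (fun k : ℕ =>
      |((x (k + L) : ℝ) - (y (k + L) : ℝ)) / (b : ℝ) ^ (k + L + 1)|) := by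
    have h1 : Summable (fun k : ℕ => (x (k + L) : ℝ) / (b : ℝ) ^ (k + L + 1)
        - (y (k + L) : ℝ) / (b : ℝ) ^ (k + L + 1)) :=
      (summable_nat_add_iff (f := fun k => (x k : ℝ) / (b : ℝ) ^ (k + 1)
        - (y k : ℝ) / (b : ℝ) ^ (k + 1)) L).mpr hsubsum
    exact (h1.congr fun k => by rw [div_sub_div_same]).abs
  have hpoint : ∀ k : ℕ, |((x (k + L) : ℝ) - (y (k + L) : ℝ)) / (b : ℝ) ^ (k + L + 1)|
      ≤ ((b : ℝ) - 1) * ((b : ℝ)⁻¹) ^ (L + 1) * ((b : ℝ)⁻¹) ^ k := by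
    intro k
    have hx1 : (x (k + L) : ℝ) ≤ (b : ℝ) - 1 := by
      have h : (x (k + L) : ℝ) + 1 ≤ (b : ℝ) := by exact_mod_cast hx (k + L)
      linarith
    have hy1 : (y (k + L) : ℝ) ≤ (b : ℝ) - 1 := by
      have h : (y (k + L) : ℝ) + 1 ≤ (b : ℝ) := by exact_mod_cast hy_lt (k + L)
      linarith
    have hx0 : (0 : ℝ) ≤ (x (k + L) : ℝ) := Nat.cast_nonneg _
    have hy0 : (0 : ℝ) ≤ (y (k + L) : ℝ) := Nat.cast_nonneg _
    have hnum : |((x (k + L) : ℝ) - (y (k + L) : ℝ))| ≤ (b : ℝ) - 1 :=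
      abs_le.mpr ⟨by linarith, by linarith⟩
    have hrhs : ((b : ℝ) - 1) * ((b : ℝ)⁻¹) ^ (L + 1) * ((b : ℝ)⁻¹) ^ k
        = ((b : ℝ) - 1) / (b : ℝ) ^ (k + L + 1) := by
      rw [mul_assoc, ← pow_add, inv_pow, ← div_eq_mul_inv]
      congr 2
      omega
    rw [hrhs, abs_div, abs_of_pos (pow_pos hb0 _)]
    gcongr
  calc |∑' k : ℕ, ((x (k + L) : ℝ) - (y (k + L) : ℝ)) / (b : ℝ) ^ (k + L + 1)|
      ≤ ∑' k : ℕ, |((x (k + L) : ℝ) - (y (k + L) : ℝ)) / (b : ℝ) ^ (k + L + 1)| := by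
        rw [← Real.norm_eq_abs]
        refine (norm_tsum_le_tsum_norm (f := fun k : ℕ =>
            ((x (k + L) : ℝ) - (y (k + L) : ℝ)) / (b : ℝ) ^ (k + L + 1))
            (habs.congr fun k => (Real.norm_eq_abs _).symm)).trans_eq
          (tsum_congr fun k => Real.norm_eq_abs _)
    _ ≤ ∑' k : ℕ, ((b : ℝ) - 1) * ((b : ℝ)⁻¹) ^ (L + 1) * ((b : ℝ)⁻¹) ^ k :=
        Summable.tsum_le_tsum hpoint habs hBsum
    _ = ((b : ℝ) - 1) * ((b : ℝ)⁻¹) ^ (L + 1) * (1 - (b : ℝ)⁻¹)⁻¹ := by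
        rw [tsum_mul_left, tsum_geometric_of_lt_one (by positivity) (inv_lt_one_of_one_lt₀ hb1)]
    _ = ((b : ℝ) ^ L)⁻¹ := by
        have hbne : (b : ℝ) ≠ 0 := ne_of_gt hb0
        have hb1ne : (b : ℝ) - 1 ≠ 0 := by linarith
        field_simp
        rw [one_div, inv_pow, pow_succ]
        field_simp
end
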